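/- arXiv:2507.23624 — 4 statements merged into one kernel-verified Lean document; each statement's English description precedes it below -/
import Mathlib

section
/- For every graph F and real ε ∈ (0,1), there exist σ ∈ (0,1) and an integer n₀ ≥ 1 such that the following holds for every n ≥ n₀: every graph G on n vertices with minimum degree at least (δ*_F + ε)·n admits a fractional F-decomposition in which every copy of F in G receives weight at least σ/C(n−2, v(F)−2). -/
open Finset
open scoped Classical

noncomputable section

/-- The degree of `v` in `G` (number of neighbours). -/
def degOf {n : ℕ} (G : SimpleGraph (Fin n)) (v : Fin n) : ℕ :=
  (G.neighborSet v).ncard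

/-- `H` is a copy of `F` in `G`: `H` is a subgraph of `G` obtained as the image of `F`
under an injection of its vertex set. -/
def IsCopyOf {k n : ℕ} (F : SimpleGraph (Fin k)) (G H : SimpleGraph (Fin n)) : Prop :=
  H ≤ G ∧ ∃ f : Fin k ↪ Fin n, H = F.map f

/-- `w` is a fractional `F`-packing of `G`: nonnegative weights on the copies of `F` in
`G` such that for every edge of `G` the weights of the copies containing it sum to at
most `1`. -/
def IsFracFPacking {k n : ℕ} (F : SimpleGraph (Fin k)) (G : SimpleGraph (Fin n))
    (w : SimpleGraph (Fin n) → ℝ) : Prop :=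
  (∀ H, 0 ≤ w H) ∧ (∀ H, ¬ IsCopyOf F G H → w H = 0) ∧
  ∀ e ∈ G.edgeSet,
    ∑ H ∈ Finset.univ.filter (fun H => IsCopyOf F G H ∧ e ∈ H.edgeSet), w H ≤ 1

/-- `w` is a fractional `F`-decomposition of `G`: nonnegative weights on the copies of
`F` in `G` such that for every edge of `G` the weights of the copies containing it sum
to exactly `1`. -/
def IsFracFDecomp {k n : ℕ} (F : SimpleGraph (Fin k)) (G : SimpleGraph (Fin n))
    (w : SimpleGraph (Fin n) → ℝ) : Prop :=
  (∀ H, 0 ≤ w H) ∧ (∀ H, ¬ IsCopyOf F G H → w H = 0) ∧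
  ∀ e ∈ G.edgeSet,
    ∑ H ∈ Finset.univ.filter (fun H => IsCopyOf F G H ∧ e ∈ H.edgeSet), w H = 1

/-- The fractional `F`-decomposition threshold `δ*_F`. -/
def fracFThreshold {k : ℕ} (F : SimpleGraph (Fin k)) : ℝ :=
  sInf {δ : ℝ | δ ∈ Set.Icc (0:ℝ) 1 ∧ ∃ n₀ : ℕ, ∀ n : ℕ, n₀ ≤ n →
    ∀ G : SimpleGraph (Fin n),
      (∀ v, δ * n ≤ (degOf G v : ℝ)) → ∃ w, IsFracFDecomp F G w}

end

section Prob
variable {α : Type*} [DecidableEq α]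

/-- Bernoulli product weight of a subset `S` of `A`. -/
noncomputable def probW (p : ℝ) (A S : Finset α) : ℝ := p ^ S.card * (1 - p) ^ (A \ S).card

lemma probW_nonneg {p : ℝ} (hp0 : 0 ≤ p) (hp1 : p ≤ 1) (A S : Finset α) :
    0 ≤ probW p A S :=
  mul_nonneg (pow_nonneg hp0 _) (pow_nonneg (by linarith) _)

lemma sum_probW (p : ℝ) (A : Finset α) : ∑ S ∈ A.powerset, probW p A S = 1 := by
  have h := Finset.prod_add (fun _ : α => p) (fun _ : α => (1 - p)) A
  simp only [prod_const] at h
  have h1 : p + (1 - p) = 1 := by ring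
  rw [h1, one_pow] at h
  simp only [probW]
  exact h.symm

lemma sum_probW_superset (p : ℝ) (A B : Finset α) (hB : B ⊆ A) :
    ∑ S ∈ A.powerset, (if B ⊆ S then probW p A S else 0) = p ^ B.card := by
  rw [Finset.sum_ite, Finset.sum_const_zero, add_zero]
  have key : ∑ S ∈ (A.powerset.filter (fun S => B ⊆ S)), probW p A S
      = ∑ T ∈ (A \ B).powerset, p ^ B.card * probW p (A \ B) T := by
    refine Finset.sum_nbij' (fun S => S \ B) (fun T => T ∪ B) ?_ ?_ ?_ ?_ ?_
    · intro S hS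
      simp only [mem_filter, mem_powerset] at hS
      simp only [mem_powerset]
      exact sdiff_subset_sdiff hS.1 (le_refl B)
    · intro T hT
      simp only [mem_powerset] at hT
      simp only [mem_filter, mem_powerset]
      constructor
      · exact union_subset (hT.trans sdiff_subset) hB
      · exact subset_union_right
    · intro S hS
      simp only [mem_filter, mem_powerset] at hS
      exact sdiff_union_of_subset hS.2
    · intro T hT
      simp only [mem_powerset] at hT
      apply union_sdiff_cancel_right
      exact disjoint_of_subset_left hT sdiff_disjoint
    · intro S hS
      simp only [mem_filter, mem_powerset] at hS
      unfold probW
      have hc : S.card = (S \ B).card + B.card := by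
        rw [card_sdiff_of_subset hS.2]
        have := card_le_card hS.2
        omega
      have hset : A \ S = (A \ B) \ (S \ B) := by
        ext x
        simp only [mem_sdiff]
        constructor
        · intro ⟨hxA, hxS⟩
          exact ⟨⟨hxA, fun hxB => hxS (hS.2 hxB)⟩, fun ⟨h1, _⟩ => hxS h1⟩
        · intro ⟨⟨hxA, hxB⟩, hx⟩
          refine ⟨hxA, fun hxS => hx ⟨hxS, hxB⟩⟩
      rw [hc, hset, pow_add]
      ring
  rw [key, ← Finset.mul_sum, sum_probW, mul_one]

lemma sum_probW_mem (p : ℝ) (A : Finset α) {H : α} (hH : H ∈ A) :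
    ∑ S ∈ A.powerset, (if H ∈ S then probW p A S else 0) = p := by
  have h := sum_probW_superset p A {H} (by simpa using hH)
  simpa using h

lemma sum_probW_pair (p : ℝ) (A : Finset α) {H H' : α} (hH : H ∈ A) (hH' : H' ∈ A)
    (hne : H ≠ H') :
    ∑ S ∈ A.powerset, (if H ∈ S ∧ H' ∈ S then probW p A S else 0) = p ^ 2 := by
  have h := sum_probW_superset p A {H, H'} (by
    intro x hx
    simp only [mem_insert, mem_singleton] at hx
    rcases hx with rfl | rfl <;> assumption)
  have hc : ({H, H'} : Finset α).card = 2 := by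
    rw [card_insert_of_notMem (by simpa using hne), card_singleton]
  rw [hc] at h
  rw [← h]
  apply Finset.sum_congr rfl
  intro S _
  congr 1
  simp [insert_subset_iff]

lemma sum_probW_count (p : ℝ) (hp0 : 0 ≤ p) (hp1 : p ≤ 1) (A : Finset α)
    (Q : α → Prop) {H : α} (hH : H ∈ A) :
    ∑ S ∈ A.powerset, (if H ∈ S then probW p A S * ((S.filter Q).card : ℝ) else 0)
      ≤ p * (p * ((A.filter Q).card : ℝ) + 1) := by
  have hcount : ∀ S ∈ A.powerset,
      (if H ∈ S then probW p A S * ((S.filter Q).card : ℝ) else 0)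
        = ∑ x ∈ A.filter Q, (if H ∈ S ∧ x ∈ S then probW p A S else 0) := by
    intro S hS
    simp only [mem_powerset] at hS
    by_cases hHS : H ∈ S
    · simp only [hHS, true_and, if_true]
      have : ((S.filter Q).card : ℝ) = ∑ x ∈ A.filter Q, (if x ∈ S then (1:ℝ) else 0) := by
        rw [Finset.sum_ite_mem]
        have : A.filter Q ∩ S = S.filter Q := by
          ext x
          simp only [mem_inter, mem_filter]
          exact ⟨fun ⟨⟨_, hq⟩, hs⟩ => ⟨hs, hq⟩, fun ⟨hs, hq⟩ => ⟨⟨hS hs, hq⟩, hs⟩⟩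
        rw [this, Finset.sum_const, nsmul_eq_mul, mul_one]
      rw [this, Finset.mul_sum]
      apply Finset.sum_congr rfl
      intro x _
      by_cases hx : x ∈ S <;> simp [hx]
    · simp [hHS]
  rw [Finset.sum_congr rfl hcount, Finset.sum_comm]
  have hbound : ∀ x ∈ A.filter Q,
      ∑ S ∈ A.powerset, (if H ∈ S ∧ x ∈ S then probW p A S else 0)
        ≤ p ^ 2 + (if x = H then p else 0) := by
    intro x hx
    by_cases hxH : x = H
    · subst hxH
      have heq : ∀ S ∈ A.powerset, (if x ∈ S ∧ x ∈ S then probW p A S else 0)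
          = (if x ∈ S then probW p A S else 0) := by
        intro S _; simp
      rw [Finset.sum_congr rfl heq, sum_probW_mem p A (mem_of_mem_filter x hx)]
      simp only [if_pos rfl]
      have : (if True then p else 0) = p := by simp
      nlinarith [sq_nonneg p]
    · rw [sum_probW_pair p A hH (mem_of_mem_filter x hx) (fun h => hxH h.symm)]
      simp only [if_neg hxH, add_zero, le_refl]
  calc ∑ x ∈ A.filter Q, ∑ S ∈ A.powerset, (if H ∈ S ∧ x ∈ S then probW p A S else 0)
      ≤ ∑ x ∈ A.filter Q, (p ^ 2 + (if x = H then p else 0)) :=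
        Finset.sum_le_sum hbound
    _ ≤ p * (p * ((A.filter Q).card : ℝ) + 1) := by
        rw [Finset.sum_add_distrib, Finset.sum_const, nsmul_eq_mul]
        have h1 : ∑ x ∈ A.filter Q, (if x = H then p else 0) ≤ p := by
          rw [Finset.sum_ite_eq' (A.filter Q) H (fun _ => p)]
          split <;> simp [hp0, le_refl]
        have h2 : (0:ℝ) ≤ ((A.filter Q).card : ℝ) := Nat.cast_nonneg _
        nlinarith


end Prob

section Count

/-- Embeddings prescribed on a finite set `t` number at most `n.descFactorial (k - t.card)`. -/
lemma card_emb_fix {k n : ℕ} (t : Finset (Fin k)) (v : Fin k → Fin n) :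
    (Finset.univ.filter (fun f : Fin k ↪ Fin n => ∀ a ∈ t, f a = v a)).card
      ≤ n.descFactorial (k - t.card) := by
  classical
  have key : (Finset.univ.filter (fun f : Fin k ↪ Fin n => ∀ a ∈ t, f a = v a)).card
      ≤ (Finset.univ : Finset ({x : Fin k // x ∉ t} ↪ Fin n)).card := by
    apply Finset.card_le_card_of_injOn
      (fun f => (Function.Embedding.subtype (fun x : Fin k => x ∉ t)).trans f)
    · intro f _; exact Finset.mem_univ _
    · intro f hf g hg hfg
      simp only [Finset.coe_filter, Set.mem_setOf_eq] at hf hg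
      ext a
      by_cases ha : a ∈ t
      · rw [hf.2 a ha, hg.2 a ha]
      · have h := congrFun (congrArg
          (fun (e : {x : Fin k // x ∉ t} ↪ Fin n) => (e : {x : Fin k // x ∉ t} → Fin n))
          hfg) ⟨a, ha⟩
        exact congrArg Fin.val (by simpa using h)
  rw [Finset.card_univ, Fintype.card_embedding_eq, Fintype.card_fin] at key
  have hc : Fintype.card {x : Fin k // x ∉ t} = k - t.card := by
    rw [Fintype.card_subtype_compl]
    simp [Fintype.card_fin]
  rwa [hc] at key

/-- Descending factorials shift: for `j + 3 ≤ n`,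
`n.descFactorial j ≤ 2^j * (n-2).descFactorial j`. -/
lemma descFactorial_shift (j : ℕ) : ∀ n : ℕ, j + 3 ≤ n →
    n.descFactorial j ≤ 2 ^ j * (n - 2).descFactorial j := by
  induction j with
  | zero => intro n _; simp
  | succ j ih =>
    intro n hn
    rw [Nat.descFactorial_succ, Nat.descFactorial_succ]
    have h1 : n.descFactorial j ≤ 2 ^ j * (n - 2).descFactorial j := ih n (by omega)
    have h2 : n - j ≤ 2 * (n - 2 - j) := by omega
    calc (n - j) * n.descFactorial j
        ≤ (2 * (n - 2 - j)) * (2 ^ j * (n - 2).descFactorial j) :=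
          Nat.mul_le_mul h2 h1
      _ = 2 ^ (j + 1) * ((n - 2 - j) * (n - 2).descFactorial j) := by ring

lemma map_edgeSet' {k n : ℕ} (F : SimpleGraph (Fin k)) (f : Fin k ↪ Fin n) :
    (F.map f).edgeSet = Sym2.map f '' F.edgeSet := by
  ext e
  induction e with
  | _ x y =>
    simp only [SimpleGraph.mem_edgeSet, SimpleGraph.map_adj, Set.mem_image]
    constructor
    · rintro ⟨a, b, hab, ha, hb⟩
      exact ⟨s(a, b), hab, by simp [ha, hb]⟩
    · rintro ⟨e', he', hmap⟩
      induction e' with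
      | _ a b =>
        rw [Sym2.map_pair_eq, Sym2.eq_iff] at hmap
        rcases hmap with ⟨ha, hb⟩ | ⟨ha, hb⟩
        · exact ⟨a, b, he', ha, hb⟩
        · exact ⟨b, a, (SimpleGraph.mem_edgeSet F).mp he' |>.symm, hb, ha⟩

/-- Copies of `F` through a fixed edge. -/
lemma copy_edge_count {k n : ℕ} (F : SimpleGraph (Fin k)) (G : SimpleGraph (Fin n))
    (e : Sym2 (Fin n)) :
    (Finset.univ.filter (fun H : SimpleGraph (Fin n) => IsCopyOf F G H ∧ e ∈ H.edgeSet)).card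
      ≤ k ^ 2 * n.descFactorial (k - 2) := by
  induction e with
  | _ x y =>
    set s : Finset (Fin k ↪ Fin n) :=
      Finset.univ.filter (fun f => ∃ a b, F.Adj a b ∧ f a = x ∧ f b = y) with hs
    have hsurj : (Finset.univ.filter
        (fun H : SimpleGraph (Fin n) => IsCopyOf F G H ∧ s(x,y) ∈ H.edgeSet)).card ≤ s.card := by
      apply Finset.card_le_card_of_surjOn (fun f : Fin k ↪ Fin n => F.map f)
      intro H hH
      simp only [Finset.coe_filter, Set.mem_setOf_eq, Finset.mem_univ, true_and] at hH
      obtain ⟨⟨hle, f, rfl⟩, hedge⟩ := hH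
      rw [SimpleGraph.mem_edgeSet, SimpleGraph.map_adj] at hedge
      obtain ⟨a, b, hab, ha, hb⟩ := hedge
      refine ⟨f, ?_, rfl⟩
      simp only [hs, Finset.coe_filter, Set.mem_setOf_eq, Finset.mem_univ, true_and]
      exact ⟨a, b, hab, ha, hb⟩
    have hcover : s ⊆ (Finset.univ ×ˢ Finset.univ : Finset (Fin k × Fin k)).biUnion
        (fun ab => Finset.univ.filter
          (fun f : Fin k ↪ Fin n => F.Adj ab.1 ab.2 ∧ f ab.1 = x ∧ f ab.2 = y)) := by
      intro f hf
      simp only [hs, Finset.mem_filter, Finset.mem_univ, true_and] at hf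
      obtain ⟨a, b, hab, ha, hb⟩ := hf
      simp only [Finset.mem_biUnion]
      exact ⟨(a, b), by simp, by simp [hab, ha, hb]⟩
    have hone : ∀ ab : Fin k × Fin k,
        (Finset.univ.filter
          (fun f : Fin k ↪ Fin n => F.Adj ab.1 ab.2 ∧ f ab.1 = x ∧ f ab.2 = y)).card
          ≤ n.descFactorial (k - 2) := by
      rintro ⟨a, b⟩
      by_cases hab : F.Adj a b
      · have hne : a ≠ b := F.ne_of_adj hab
        have hsub : (Finset.univ.filter
            (fun f : Fin k ↪ Fin n => F.Adj a b ∧ f a = x ∧ f b = y))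
            ⊆ Finset.univ.filter
              (fun f : Fin k ↪ Fin n => ∀ c ∈ ({a, b} : Finset (Fin k)), f c =
                (fun c => if c = a then x else y) c) := by
          intro f hf
          simp only [Finset.mem_filter, Finset.mem_univ, true_and] at hf ⊢
          intro c hc
          simp only [Finset.mem_insert, Finset.mem_singleton] at hc
          rcases hc with rfl | rfl
          · simpa using hf.2.1
          · simp only [if_neg hne.symm]
            exact hf.2.2
        calc _ ≤ _ := Finset.card_le_card hsub
          _ ≤ n.descFactorial (k - ({a, b} : Finset (Fin k)).card) := card_emb_fix _ _
          _ = n.descFactorial (k - 2) := by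
              rw [Finset.card_insert_of_notMem (by simpa using hne), Finset.card_singleton]
      · simp only [hab, false_and, Finset.filter_false, Finset.card_empty]
        exact Nat.zero_le _
    calc _ ≤ s.card := hsurj
      _ ≤ _ := Finset.card_le_card hcover
      _ ≤ ∑ _ab ∈ (Finset.univ ×ˢ Finset.univ : Finset (Fin k × Fin k)),
            n.descFactorial (k - 2) :=
          (Finset.card_biUnion_le).trans (Finset.sum_le_sum (fun ab _ => hone ab))
      _ = k ^ 2 * n.descFactorial (k - 2) := by
          rw [Finset.sum_const, Finset.card_product, Finset.card_univ, Fintype.card_fin,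
            smul_eq_mul, pow_two]

/-- Copies of `F` whose support contains a fixed vertex. -/
lemma copy_vertex_count {k n : ℕ} (F : SimpleGraph (Fin k)) (G : SimpleGraph (Fin n))
    (v : Fin n) :
    (Finset.univ.filter
      (fun H : SimpleGraph (Fin n) => IsCopyOf F G H ∧ v ∈ H.support)).card
      ≤ k * n.descFactorial (k - 1) := by
  set s : Finset (Fin k ↪ Fin n) :=
    Finset.univ.filter (fun f => ∃ a, f a = v) with hs
  have hsurj : (Finset.univ.filter
      (fun H : SimpleGraph (Fin n) => IsCopyOf F G H ∧ v ∈ H.support)).card ≤ s.card := by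
    apply Finset.card_le_card_of_surjOn (fun f : Fin k ↪ Fin n => F.map f)
    intro H hH
    simp only [Finset.coe_filter, Set.mem_setOf_eq, Finset.mem_univ, true_and] at hH
    obtain ⟨⟨hle, f, rfl⟩, hsupp⟩ := hH
    obtain ⟨w, hw⟩ := (SimpleGraph.mem_support _).mp hsupp
    rw [SimpleGraph.map_adj] at hw
    obtain ⟨a, b, hab, ha, hb⟩ := hw
    exact ⟨f, by simp only [hs, Finset.coe_filter, Set.mem_setOf_eq, Finset.mem_univ,
      true_and]; exact ⟨a, ha⟩, rfl⟩
  have hcover : s ⊆ (Finset.univ : Finset (Fin k)).biUnion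
      (fun a => Finset.univ.filter (fun f : Fin k ↪ Fin n => f a = v)) := by
    intro f hf
    simp only [hs, Finset.mem_filter, Finset.mem_univ, true_and] at hf
    obtain ⟨a, ha⟩ := hf
    simp only [Finset.mem_biUnion]
    exact ⟨a, by simp, by simp [ha]⟩
  have hone : ∀ a : Fin k,
      (Finset.univ.filter (fun f : Fin k ↪ Fin n => f a = v)).card
        ≤ n.descFactorial (k - 1) := by
    intro a
    have hsub : (Finset.univ.filter (fun f : Fin k ↪ Fin n => f a = v))
        ⊆ Finset.univ.filter
          (fun f : Fin k ↪ Fin n => ∀ c ∈ ({a} : Finset (Fin k)), f c = (fun _ => v) c) := by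
      intro f hf
      simp only [Finset.mem_filter, Finset.mem_univ, true_and] at hf ⊢
      intro c hc
      simp only [Finset.mem_singleton] at hc
      subst hc; exact hf
    calc _ ≤ _ := Finset.card_le_card hsub
      _ ≤ n.descFactorial (k - ({a} : Finset (Fin k)).card) := card_emb_fix _ _
      _ = n.descFactorial (k - 1) := by rw [Finset.card_singleton]
  calc _ ≤ s.card := hsurj
    _ ≤ _ := Finset.card_le_card hcover
    _ ≤ ∑ _a ∈ (Finset.univ : Finset (Fin k)), n.descFactorial (k - 1) :=
        (Finset.card_biUnion_le).trans (Finset.sum_le_sum (fun a _ => hone a))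
    _ = k * n.descFactorial (k - 1) := by
        rw [Finset.sum_const, Finset.card_univ, Fintype.card_fin, smul_eq_mul]

end Count

section GraphAux
variable {k n : ℕ} {F : SimpleGraph (Fin k)} {G H : SimpleGraph (Fin n)}

lemma copy_edge_ncard (h : IsCopyOf F G H) : H.edgeSet.ncard ≤ F.edgeSet.ncard := by
  obtain ⟨-, f, rfl⟩ := h
  rw [map_edgeSet']
  exact Set.ncard_image_le (Set.toFinite _)

lemma copy_support_subset {f : Fin k ↪ Fin n} :
    (F.map f).support ⊆ Set.range f := by
  intro v hv
  obtain ⟨w, hw⟩ := (SimpleGraph.mem_support _).mp hv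
  rw [SimpleGraph.map_adj] at hw
  obtain ⟨a, b, _, ha, _⟩ := hw
  exact ⟨a, ha⟩

lemma copy_suppFinset_card (h : IsCopyOf F G H) :
    (Finset.univ.filter (fun v : Fin n => v ∈ H.support)).card ≤ k := by
  obtain ⟨-, f, rfl⟩ := h
  have hsub : (Finset.univ.filter (fun v : Fin n => v ∈ (F.map f).support))
      ⊆ Finset.univ.image f := by
    intro v hv
    simp only [Finset.mem_filter, Finset.mem_univ, true_and] at hv
    obtain ⟨a, ha⟩ := copy_support_subset hv
    exact Finset.mem_image.mpr ⟨a, Finset.mem_univ _, ha⟩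
  calc _ ≤ (Finset.univ.image f).card := by convert Finset.card_le_card hsub
    _ ≤ (Finset.univ : Finset (Fin k)).card := Finset.card_image_le
    _ = k := by rw [Finset.card_univ, Fintype.card_fin]

lemma copy_neighbor_ncard (h : IsCopyOf F G H) (v : Fin n) :
    (H.neighborSet v).ncard ≤ k := by
  obtain ⟨-, f, rfl⟩ := h
  have hsub : (F.map f).neighborSet v ⊆ Set.range f := by
    intro w hw
    rw [SimpleGraph.mem_neighborSet, SimpleGraph.map_adj] at hw
    obtain ⟨a, b, _, _, hb⟩ := hw
    exact ⟨b, hb⟩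
  calc (((F.map f)).neighborSet v).ncard ≤ (Set.range ⇑f).ncard :=
        Set.ncard_le_ncard hsub (Set.toFinite _)
    _ = (⇑f '' Set.univ).ncard := by rw [Set.image_univ]
    _ ≤ (Set.univ : Set (Fin k)).ncard := Set.ncard_image_le (Set.toFinite _)
    _ = k := by rw [Set.ncard_univ, Nat.card_eq_fintype_card, Fintype.card_fin]

lemma ncard_biUnion_le {α β : Type*} (T : Finset α) (f : α → Set β)
    (hfin : ∀ a, (f a).Finite) :
    (⋃ a ∈ (T : Set α), f a).ncard ≤ ∑ a ∈ T, (f a).ncard := by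
  classical
  induction T using Finset.induction with
  | empty => simp
  | insert _ _ hnotmem ih =>
    rename_i a T
    rw [Finset.coe_insert, Set.biUnion_insert, Finset.sum_insert hnotmem]
    calc (f a ∪ ⋃ x ∈ (T : Set α), f x).ncard
        ≤ (f a).ncard + (⋃ x ∈ (T : Set α), f x).ncard := Set.ncard_union_le _ _
      _ ≤ (f a).ncard + ∑ x ∈ T, (f x).ncard := by omega

/-- Degree loss from removing the edges of a family of copies. -/
lemma degOf_delete_ge (G : SimpleGraph (Fin n)) (T : Finset (SimpleGraph (Fin n))) (v : Fin n) :
    degOf G v ≤ degOf (G.deleteEdges (⋃ H ∈ (T : Set (SimpleGraph (Fin n))), H.edgeSet)) v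
      + ∑ H ∈ T.filter (fun H => v ∈ H.support), (H.neighborSet v).ncard := by
  set Erem := ⋃ H ∈ (T : Set (SimpleGraph (Fin n))), H.edgeSet with hErem
  set Tv := T.filter (fun H => v ∈ H.support) with hTv
  have hsub : G.neighborSet v ⊆ (G.deleteEdges Erem).neighborSet v
      ∪ ⋃ H ∈ (Tv : Set (SimpleGraph (Fin n))), H.neighborSet v := by
    intro w hw
    by_cases he : s(v, w) ∈ Erem
    · right
      simp only [hErem, Set.mem_iUnion] at he
      obtain ⟨H, hH, hedge⟩ := he
      have hadj : H.Adj v w := (SimpleGraph.mem_edgeSet H).mp hedge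
      have hvs : v ∈ H.support := (SimpleGraph.mem_support _).mpr ⟨w, hadj⟩
      refine Set.mem_biUnion ?_ hadj
      simp only [hTv, Finset.coe_filter, Set.mem_setOf_eq]
      exact ⟨hH, hvs⟩
    · left
      exact SimpleGraph.deleteEdges_adj.mpr ⟨hw, he⟩
  calc degOf G v ≤ ((G.deleteEdges Erem).neighborSet v
        ∪ ⋃ H ∈ (Tv : Set (SimpleGraph (Fin n))), H.neighborSet v).ncard :=
        Set.ncard_le_ncard hsub (Set.toFinite _)
    _ ≤ ((G.deleteEdges Erem).neighborSet v).ncard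
        + (⋃ H ∈ (Tv : Set (SimpleGraph (Fin n))), H.neighborSet v).ncard :=
        Set.ncard_union_le _ _
    _ ≤ degOf (G.deleteEdges Erem) v + ∑ H ∈ Tv, (H.neighborSet v).ncard := by
        unfold degOf
        refine Nat.add_le_add le_rfl ?_
        simpa using ncard_biUnion_le Tv (fun H => H.neighborSet v) (fun _ => Set.toFinite _)

/-- Copies sharing an edge with a given copy. -/
lemma copy_conflict_count (h : IsCopyOf F G H) :
    (Finset.univ.filter (fun H' : SimpleGraph (Fin n) =>
        IsCopyOf F G H' ∧ ¬ Disjoint H.edgeSet H'.edgeSet)).card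
      ≤ F.edgeSet.ncard * (k ^ 2 * n.descFactorial (k - 2)) := by
  classical
  set EH := (Set.toFinite H.edgeSet).toFinset with hEH
  have hsub : (Finset.univ.filter (fun H' : SimpleGraph (Fin n) =>
      IsCopyOf F G H' ∧ ¬ Disjoint H.edgeSet H'.edgeSet))
      ⊆ EH.biUnion (fun e => Finset.univ.filter
          (fun H' : SimpleGraph (Fin n) => IsCopyOf F G H' ∧ e ∈ H'.edgeSet)) := by
    intro H' hH'
    simp only [Finset.mem_filter, Finset.mem_univ, true_and] at hH'
    obtain ⟨hcopy, hdisj⟩ := hH'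
    obtain ⟨e, he1, he2⟩ := Set.not_disjoint_iff.mp hdisj
    refine Finset.mem_biUnion.mpr ⟨e, ?_, ?_⟩
    · rw [hEH, Set.Finite.mem_toFinset]; exact he1
    · simp only [Finset.mem_filter, Finset.mem_univ, true_and]
      exact ⟨hcopy, he2⟩
  calc _ ≤ _ := Finset.card_le_card hsub
    _ ≤ ∑ e ∈ EH, (Finset.univ.filter (fun H' : SimpleGraph (Fin n) =>
          IsCopyOf F G H' ∧ e ∈ H'.edgeSet)).card := Finset.card_biUnion_le
    _ ≤ ∑ _e ∈ EH, k ^ 2 * n.descFactorial (k - 2) :=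
        Finset.sum_le_sum (fun e _ => copy_edge_count F G e)
    _ = EH.card * (k ^ 2 * n.descFactorial (k - 2)) := by
        rw [Finset.sum_const, smul_eq_mul]
    _ ≤ F.edgeSet.ncard * (k ^ 2 * n.descFactorial (k - 2)) := by
        apply Nat.mul_le_mul_right
        have : EH.card = H.edgeSet.ncard :=
          (Set.ncard_eq_toFinset_card H.edgeSet (Set.toFinite _)).symm
        rw [this]
        exact copy_edge_ncard h

end GraphAux

/-- The survival probability of a fixed element under independent selection followed by
pruning of conflicts and overloaded elements. -/
lemma prune_prob_bound {α ι : Type*} [DecidableEq α] (p : ℝ) (hp0 : 0 ≤ p) (hp1 : p ≤ 1)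
    (A : Finset α) {H : α} (hH : H ∈ A)
    (conflict : α → Prop) (QV : Finset ι) (Q : ι → α → Prop) (D : ℕ)
    (prune : Finset α → Finset α)
    (hprune : ∀ S, S ⊆ A → H ∈ S → (∀ H' ∈ S, H' ≠ H → ¬ conflict H') →
      (∀ v ∈ QV, ((S.filter (Q v)).card ≤ D)) → H ∈ prune S)
    (Cf Cv : ℝ)
    (hCf : (((A.erase H).filter conflict).card : ℝ) ≤ Cf)
    (hCv : ∀ v ∈ QV, (((A.filter (Q v)).card : ℝ)) ≤ Cv) (hCv0 : 0 ≤ Cv) :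
    p - Cf * p ^ 2 - (QV.card : ℝ) * (p * (p * Cv + 1)) / (D + 1)
      ≤ ∑ S ∈ A.powerset, (if H ∈ prune S then probW p A S else 0) := by
  classical
  set CF : Finset α := (A.erase H).filter conflict with hCF
  set g : Finset α → ℝ := fun S =>
    (if H ∈ S then probW p A S else 0)
    - ∑ H' ∈ CF, (if H ∈ S ∧ H' ∈ S then probW p A S else 0)
    - (∑ v ∈ QV, (if H ∈ S then probW p A S * ((S.filter (Q v)).card : ℝ) else 0)) / (D + 1)
    with hg
  have hD1 : (0:ℝ) < (D:ℝ) + 1 := by positivity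
  have hpointwise : ∀ S ∈ A.powerset, g S ≤ (if H ∈ prune S then probW p A S else 0) := by
    intro S hS
    rw [Finset.mem_powerset] at hS
    have hPW : 0 ≤ probW p A S := probW_nonneg hp0 hp1 A S
    have hterm1 : (if H ∈ S then probW p A S else 0) ≤ probW p A S := by
      split <;> [exact le_refl _; exact hPW]
    have hconfsum_nonneg : 0 ≤ ∑ H' ∈ CF, (if H ∈ S ∧ H' ∈ S then probW p A S else 0) :=
      Finset.sum_nonneg (fun _ _ => by split <;> [exact hPW; exact le_refl _])
    have hloadsum_nonneg :
        0 ≤ (∑ v ∈ QV, (if H ∈ S then probW p A S * ((S.filter (Q v)).card : ℝ) else 0)) / (D + 1) := by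
      apply div_nonneg _ (le_of_lt hD1)
      exact Finset.sum_nonneg (fun _ _ => by
        split
        · exact mul_nonneg hPW (Nat.cast_nonneg _)
        · exact le_refl _)
    by_cases hP : H ∈ prune S
    · rw [if_pos hP]
      calc g S ≤ (if H ∈ S then probW p A S else 0) := by
            simp only [hg]
            linarith
        _ ≤ probW p A S := hterm1
    · rw [if_neg hP]
      by_cases hHS : H ∈ S
      · -- pruning failed: conflict or overload
        by_cases hconf : ∀ H' ∈ S, H' ≠ H → ¬ conflict H'
        · -- overload must have occurred
          have hload : ¬ ∀ v ∈ QV, ((S.filter (Q v)).card ≤ D) := by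
            intro hload
            exact hP (hprune S hS hHS hconf hload)
          push_neg at hload
          obtain ⟨v, hv, hcard⟩ := hload
          have hterm : probW p A S
              ≤ (∑ v ∈ QV, (if H ∈ S then probW p A S * ((S.filter (Q v)).card : ℝ) else 0)) / (D + 1) := by
            rw [le_div_iff₀ hD1]
            calc probW p A S * ((D:ℝ) + 1)
                ≤ probW p A S * ((S.filter (Q v)).card : ℝ) := by
                  apply mul_le_mul_of_nonneg_left _ hPW
                  have : (D + 1 : ℕ) ≤ (S.filter (Q v)).card := hcard
                  exact_mod_cast this
              _ ≤ _ := by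
                  have hnn : ∀ i ∈ QV,
                      (0:ℝ) ≤ (if H ∈ S then probW p A S * ((S.filter (Q i)).card : ℝ) else 0) := by
                    intro i _
                    rw [if_pos hHS]
                    exact mul_nonneg hPW (Nat.cast_nonneg _)
                  have hle := Finset.single_le_sum hnn hv
                  rw [if_pos hHS] at hle
                  exact hle
          simp only [hg]
          rw [if_pos hHS]
          linarith
        · push_neg at hconf
          obtain ⟨H', hH'S, hne, hconfl'⟩ := hconf
          have hterm : probW p A S ≤ ∑ H' ∈ CF, (if H ∈ S ∧ H' ∈ S then probW p A S else 0) := by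
            have hH'CF : H' ∈ CF := by
              rw [hCF, Finset.mem_filter, Finset.mem_erase]
              exact ⟨⟨hne, hS hH'S⟩, hconfl'⟩
            have hnn : ∀ i ∈ CF, (0:ℝ) ≤ (if H ∈ S ∧ i ∈ S then probW p A S else 0) := by
              intro i _
              split
              · exact hPW
              · exact le_refl _
            have hle := Finset.single_le_sum hnn hH'CF
            rw [if_pos ⟨hHS, hH'S⟩] at hle
            exact hle
          simp only [hg]
          rw [if_pos hHS]
          linarith
      · -- H ∉ S: everything vanishes
        simp only [hg]
        rw [if_neg hHS]
        have h2 : ∑ H' ∈ CF, (if H ∈ S ∧ H' ∈ S then probW p A S else 0) = 0 :=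
          Finset.sum_eq_zero (fun _ _ => by rw [if_neg (fun h => hHS h.1)])
        have h3 : ∑ v ∈ QV, (if H ∈ S then probW p A S * ((S.filter (Q v)).card : ℝ) else 0) = 0 :=
          Finset.sum_eq_zero (fun _ _ => by rw [if_neg hHS])
        rw [h2, h3]
        simp
  have hsum := Finset.sum_le_sum hpointwise
  refine le_trans ?_ hsum
  -- compute the sum of g
  have hsplit : ∑ S ∈ A.powerset, g S
      = (∑ S ∈ A.powerset, (if H ∈ S then probW p A S else 0))
      - (∑ S ∈ A.powerset, ∑ H' ∈ CF, (if H ∈ S ∧ H' ∈ S then probW p A S else 0))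
      - (∑ S ∈ A.powerset,
          (∑ v ∈ QV, (if H ∈ S then probW p A S * ((S.filter (Q v)).card : ℝ) else 0))) / (D + 1) := by
    simp only [hg]
    rw [Finset.sum_sub_distrib, Finset.sum_sub_distrib, ← Finset.sum_div]
  rw [hsplit, sum_probW_mem p A hH]
  have hconfbound : ∑ S ∈ A.powerset, ∑ H' ∈ CF, (if H ∈ S ∧ H' ∈ S then probW p A S else 0)
      ≤ Cf * p ^ 2 := by
    rw [Finset.sum_comm]
    have : ∀ H' ∈ CF, ∑ S ∈ A.powerset, (if H ∈ S ∧ H' ∈ S then probW p A S else 0) = p ^ 2 := by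
      intro H' hH'
      rw [hCF, Finset.mem_filter, Finset.mem_erase] at hH'
      exact sum_probW_pair p A hH (hH'.1.2) (fun h => hH'.1.1 h.symm)
    rw [Finset.sum_congr rfl this, Finset.sum_const, nsmul_eq_mul]
    apply mul_le_mul_of_nonneg_right _ (sq_nonneg p)
    exact hCf
  have hloadbound : ∑ S ∈ A.powerset,
      (∑ v ∈ QV, (if H ∈ S then probW p A S * ((S.filter (Q v)).card : ℝ) else 0))
      ≤ (QV.card : ℝ) * (p * (p * Cv + 1)) := by
    rw [Finset.sum_comm]
    calc ∑ v ∈ QV, ∑ S ∈ A.powerset,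
          (if H ∈ S then probW p A S * ((S.filter (Q v)).card : ℝ) else 0)
        ≤ ∑ v ∈ QV, p * (p * Cv + 1) := by
          apply Finset.sum_le_sum
          intro v hv
          calc _ ≤ p * (p * ((A.filter (Q v)).card : ℝ) + 1) :=
                sum_probW_count p hp0 hp1 A (Q v) hH
            _ ≤ p * (p * Cv + 1) := by
                apply mul_le_mul_of_nonneg_left _ hp0
                have := hCv v hv
                nlinarith
      _ = (QV.card : ℝ) * (p * (p * Cv + 1)) := by
          rw [Finset.sum_const, nsmul_eq_mul]
  have hdiv : (∑ S ∈ A.powerset,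
      (∑ v ∈ QV, (if H ∈ S then probW p A S * ((S.filter (Q v)).card : ℝ) else 0))) / (D + 1)
      ≤ (QV.card : ℝ) * (p * (p * Cv + 1)) / (D + 1) := by
    exact (div_le_div_iff_of_pos_right hD1).mpr hloadbound
  linarith

section Seed
variable {k n : ℕ} (F : SimpleGraph (Fin k)) (G : SimpleGraph (Fin n))

/-- Seeding an edge-disjoint family `P` of copies with weight one on top of a
fractional decomposition of the graph with the edges of `P` removed gives a fractional
decomposition of `G`. -/
lemma seed_decomp (P : Finset (SimpleGraph (Fin n)))
    (hP : ∀ H ∈ P, IsCopyOf F G H)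
    (hdisj : ∀ H ∈ P, ∀ H' ∈ P, H ≠ H' → Disjoint H.edgeSet H'.edgeSet)
    (w' : SimpleGraph (Fin n) → ℝ)
    (hw' : IsFracFDecomp F
      (G.deleteEdges (⋃ H ∈ (P : Set (SimpleGraph (Fin n))), H.edgeSet)) w') :
    IsFracFDecomp F G (fun H => (if H ∈ P then (1:ℝ) else 0) + w' H) := by
  classical
  set Erem : Set (Sym2 (Fin n)) := ⋃ H ∈ (P : Set (SimpleGraph (Fin n))), H.edgeSet with hErem
  set R := G.deleteEdges Erem with hR
  have hRG : R ≤ G := SimpleGraph.deleteEdges_le _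
  have hcopyRG : ∀ H, IsCopyOf F R H → IsCopyOf F G H := by
    rintro H ⟨hle, f, rfl⟩
    exact ⟨le_trans hle hRG, f, rfl⟩
  obtain ⟨hw0, hwz, hwcov⟩ := hw'
  refine ⟨?_, ?_, ?_⟩
  · intro H
    have : (0:ℝ) ≤ (if H ∈ P then (1:ℝ) else 0) := by split <;> norm_num
    have := hw0 H
    dsimp only
    linarith
  · intro H hH
    have h1 : (if H ∈ P then (1:ℝ) else 0) = 0 := by
      rw [if_neg (fun hmem => hH (hP H hmem))]
    have h2 : w' H = 0 := hwz H (fun hc => hH (hcopyRG H hc))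
    dsimp only
    rw [h1, h2, add_zero]
  · intro e he
    rw [Finset.sum_add_distrib]
    have hseed : ∑ H ∈ Finset.univ.filter (fun H => IsCopyOf F G H ∧ e ∈ H.edgeSet),
        (if H ∈ P then (1:ℝ) else 0) = ((P.filter (fun H => e ∈ H.edgeSet)).card : ℝ) := by
      rw [Finset.sum_ite_mem]
      have hset : Finset.univ.filter (fun H => IsCopyOf F G H ∧ e ∈ H.edgeSet) ∩ P
          = P.filter (fun H => e ∈ H.edgeSet) := by
        ext H
        simp only [Finset.mem_inter, Finset.mem_filter, Finset.mem_univ, true_and]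
        constructor
        · rintro ⟨⟨_, he'⟩, hmem⟩; exact ⟨hmem, he'⟩
        · rintro ⟨hmem, he'⟩; exact ⟨⟨hP H hmem, he'⟩, hmem⟩
      rw [hset, Finset.sum_const, nsmul_eq_mul, mul_one]
    have hrest : ∑ H ∈ Finset.univ.filter (fun H => IsCopyOf F G H ∧ e ∈ H.edgeSet), w' H
        = ∑ H ∈ Finset.univ.filter (fun H => IsCopyOf F R H ∧ e ∈ H.edgeSet), w' H := by
      symm
      apply Finset.sum_subset
      · intro H hH
        simp only [Finset.mem_filter, Finset.mem_univ, true_and] at hH ⊢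
        exact ⟨hcopyRG H hH.1, hH.2⟩
      · intro H hH1 hH2
        simp only [Finset.mem_filter, Finset.mem_univ, true_and] at hH1 hH2
        push_neg at hH2
        exact hwz H (fun hc => hH2 hc hH1.2)
    rw [hseed, hrest]
    by_cases hrem : e ∈ Erem
    · -- seeded edge: seed contributes 1, w' contributes 0
      have hcard : (P.filter (fun H => e ∈ H.edgeSet)).card = 1 := by
        rw [hErem] at hrem
        simp only [Set.mem_iUnion] at hrem
        obtain ⟨H₀, hH₀P, hH₀e⟩ := hrem
        rw [Finset.card_eq_one]
        refine ⟨H₀, ?_⟩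
        ext H
        simp only [Finset.mem_filter, Finset.mem_singleton]
        constructor
        · rintro ⟨hmem, he'⟩
          by_contra hne
          exact Set.disjoint_left.mp (hdisj H hmem H₀ hH₀P hne) he' hH₀e
        · rintro rfl; exact ⟨hH₀P, hH₀e⟩
      have hzero : ∑ H ∈ Finset.univ.filter (fun H => IsCopyOf F R H ∧ e ∈ H.edgeSet), w' H
          = 0 := by
        apply Finset.sum_eq_zero
        intro H hH
        simp only [Finset.mem_filter, Finset.mem_univ, true_and] at hH
        exfalso
        have heR : e ∈ R.edgeSet := SimpleGraph.edgeSet_mono hH.1.1 hH.2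
        rw [hR, SimpleGraph.edgeSet_deleteEdges] at heR
        exact heR.2 hrem
      rw [hcard, hzero]
      norm_num
    · -- unseeded edge: seed contributes 0, w' contributes 1
      have hcard : (P.filter (fun H => e ∈ H.edgeSet)).card = 0 := by
        rw [Finset.card_eq_zero]
        rw [Finset.filter_eq_empty_iff]
        intro H hmem he'
        exact hrem (Set.mem_biUnion hmem he')
      have heR : e ∈ R.edgeSet := by
        rw [hR, SimpleGraph.edgeSet_deleteEdges]
        exact ⟨he, hrem⟩
      rw [hcard, hwcov e heR]
      norm_num
end Seed

/-- The numerical heart of the seeded decomposition argument. -/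
lemma final_numeric (ε k c1 c2 C D n σ p : ℝ)
    (hε0 : 0 < ε) (hε1 : ε ≤ 1) (hk : 2 ≤ k) (hc1 : 1 ≤ c1) (hc2 : 1 ≤ c2)
    (hC : 1 ≤ C) (hn : 32 * k^2 ≤ ε * n)
    (hD1 : ε * n / (2*k) ≤ D + 1) (hD0 : 0 ≤ D)
    (hσ : σ = ε / (64 * k^2 * (c1 + c2 + 1)))
    (hp : p = 2*σ/C) :
    σ / C ≤ p - (c2*C)*p^2 - k*(p*(p*(c1*n*C)+1))/(D+1) := by
  have hk0 : (0:ℝ) < k := by linarith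
  have hC0 : (0:ℝ) < C := by linarith
  have hden : (0:ℝ) < 64*k^2*(c1+c2+1) := by positivity
  have hσ0 : 0 < σ := by rw [hσ]; positivity
  have hp0 : 0 < p := by rw [hp]; positivity
  have hn0 : (0:ℝ) < n := by nlinarith
  have hσε : σ * (64*k^2*(c1+c2+1)) = ε := by
    rw [hσ]; field_simp
  have hk4 : (4:ℝ) ≤ k^2 := by nlinarith
  have hCp : C * p = 2*σ := by rw [hp]; field_simp
  have h1 : (c2*C)*p^2 = (2*σ*c2)*p := by
    calc (c2*C)*p^2 = c2*(C*p)*p := by ring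
      _ = (2*σ*c2)*p := by rw [hCp]; ring
  have h2 : p*(c1*n*C) = 2*σ*c1*n := by
    calc p*(c1*n*C) = c1*n*(C*p) := by ring
      _ = 2*σ*c1*n := by rw [hCp]; ring
  -- conflict term bound
  have h3 : 2*σ*c2 ≤ 1/4 := by
    have hA : 256*c2 ≤ 64*k^2*(c1+c2+1) := by nlinarith
    have : 256*(σ*c2) ≤ ε := by
      calc 256*(σ*c2) = σ*(256*c2) := by ring
        _ ≤ σ*(64*k^2*(c1+c2+1)) := by
            apply mul_le_mul_of_nonneg_left hA hσ0.le
        _ = ε := hσε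
    linarith
  -- load term bound
  have ha : 64*σ*c1*k^2*n ≤ ε*n := by
    have hpos : (0:ℝ) ≤ σ*k^2*n*(c2+1) := by positivity
    nlinarith [hσε]
  have hkey : 8*k^2*(2*σ*c1*n+1) ≤ ε*n := by nlinarith
  have h2k : (0:ℝ) < 2*k := by linarith
  have hquot : 4*k*(2*σ*c1*n+1) ≤ ε*n/(2*k) := by
    rw [le_div_iff₀ h2k]
    nlinarith
  have h4 : k*(2*σ*c1*n+1) ≤ (D+1)/4 := by
    have : 4*(k*(2*σ*c1*n+1)) ≤ D+1 := by
      calc 4*(k*(2*σ*c1*n+1)) = 4*k*(2*σ*c1*n+1) := by ring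
        _ ≤ ε*n/(2*k) := hquot
        _ ≤ D+1 := hD1
    linarith
  have hD1' : (0:ℝ) < D + 1 := by linarith
  -- third term
  have ht3 : k*(p*(p*(c1*n*C)+1))/(D+1) ≤ p/4 := by
    have hnum : k*(p*(p*(c1*n*C)+1)) = p*(k*(2*σ*c1*n+1)) := by
      rw [h2]; ring
    rw [hnum]
    rw [div_le_iff₀ hD1']
    have hX0 : (0:ℝ) ≤ 2*σ*c1*n+1 := by positivity
    calc p*(k*(2*σ*c1*n+1)) ≤ p*((D+1)/4) :=
          mul_le_mul_of_nonneg_left h4 hp0.le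
      _ = p/4*(D+1) := by ring
  have ht2 : (c2*C)*p^2 ≤ p/4 := by
    rw [h1]
    calc (2*σ*c2)*p ≤ (1/4)*p := mul_le_mul_of_nonneg_right h3 hp0.le
      _ = p/4 := by ring
  have hhalf : σ / C = p/2 := by rw [hp]; ring
  linarith

section Thresh
variable {k n : ℕ} (F : SimpleGraph (Fin k))

lemma degOf_le_pred (G : SimpleGraph (Fin n)) (v : Fin n) : degOf G v ≤ n - 1 := by
  have hsub : G.neighborSet v ⊆ (Set.univ : Set (Fin n)) \ {v} := by
    intro w hw
    exact ⟨trivial, fun hwv => G.irrefl (by rwa [Set.mem_singleton_iff.mp hwv] at hw)⟩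
  calc degOf G v ≤ ((Set.univ : Set (Fin n)) \ {v}).ncard :=
        Set.ncard_le_ncard hsub (Set.toFinite _)
    _ = (Set.univ : Set (Fin n)).ncard - ({v} : Set (Fin n)).ncard :=
        Set.ncard_diff (by simp) (Set.toFinite _)
    _ = n - 1 := by
        rw [Set.ncard_univ, Set.ncard_singleton, Nat.card_eq_fintype_card, Fintype.card_fin]

lemma one_mem_TS : (1:ℝ) ∈ {δ : ℝ | δ ∈ Set.Icc (0:ℝ) 1 ∧ ∃ n₀ : ℕ, ∀ n : ℕ, n₀ ≤ n →
    ∀ G : SimpleGraph (Fin n),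
      (∀ v, δ * n ≤ (degOf G v : ℝ)) → ∃ w, IsFracFDecomp F G w} := by
  refine ⟨⟨zero_le_one, le_refl 1⟩, 1, fun n hn G hdeg => ?_⟩
  exfalso
  have v : Fin n := ⟨0, hn⟩
  have h1 := hdeg v
  have h2 : degOf G v ≤ n - 1 := degOf_le_pred G v
  have h3 : ((degOf G v : ℕ) : ℝ) ≤ (n:ℝ) - 1 := by
    have : ((n:ℕ) - 1 : ℕ) = n - 1 := rfl
    calc ((degOf G v : ℕ) : ℝ) ≤ (((n - 1 : ℕ)) : ℝ) := by exact_mod_cast h2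
      _ = (n:ℝ) - 1 := by
          rw [Nat.cast_sub hn, Nat.cast_one]
  rw [one_mul] at h1
  linarith

/-- If some `δ'' < 1` works as a decomposition threshold then `F` must have an edge. -/
lemma exists_adj_of_thresh {δ'' : ℝ} (hδ''1 : δ'' < 1) (n₁ : ℕ)
    (hth : ∀ n : ℕ, n₁ ≤ n → ∀ G : SimpleGraph (Fin n),
      (∀ v, δ'' * n ≤ (degOf G v : ℝ)) → ∃ w, IsFracFDecomp F G w) :
    ∃ a b, F.Adj a b := by
  by_contra hno
  push_neg at hno
  have hFempty : F.edgeSet = ∅ := by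
    ext e
    induction e with
    | _ a b =>
      simp only [SimpleGraph.mem_edgeSet, Set.mem_empty_iff_false, iff_false]
      exact hno a b
  set N : ℕ := max n₁ (⌈1/(1-δ'')⌉₊ + 2) with hN
  have hN1 : n₁ ≤ N := le_max_left _ _
  have hN2 : 2 ≤ N := le_trans (by omega) (le_max_right _ _)
  have hNbig : 1/(1-δ'') ≤ (N:ℝ) := by
    calc 1/(1-δ'') ≤ (⌈1/(1-δ'')⌉₊ : ℝ) := Nat.le_ceil _
      _ ≤ (N:ℝ) := by
          have : (⌈1/(1-δ'')⌉₊ : ℕ) ≤ N := le_trans (by omega) (le_max_right _ _)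
          exact_mod_cast this
  have hδpos : 0 < 1 - δ'' := by linarith
  have hdeg : ∀ v : Fin N, δ'' * N ≤ (degOf (⊤ : SimpleGraph (Fin N)) v : ℝ) := by
    intro v
    have hdegtop : degOf (⊤ : SimpleGraph (Fin N)) v = N - 1 := by
      unfold degOf
      have : (⊤ : SimpleGraph (Fin N)).neighborSet v = (Set.univ : Set (Fin N)) \ {v} := by
        ext w
        simp only [SimpleGraph.mem_neighborSet, SimpleGraph.top_adj, Set.mem_diff,
          Set.mem_univ, true_and, Set.mem_singleton_iff]
        exact ⟨fun h hw => h hw.symm, fun h hw => h hw.symm⟩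
      rw [this, Set.ncard_diff (by simp) (Set.toFinite _), Set.ncard_univ,
        Set.ncard_singleton, Nat.card_eq_fintype_card, Fintype.card_fin]
    rw [hdegtop]
    have hcast : ((N - 1 : ℕ) : ℝ) = (N:ℝ) - 1 := by
      rw [Nat.cast_sub (by omega), Nat.cast_one]
    rw [hcast]
    have h1 : 1 ≤ (1-δ'') * N := by
      calc (1:ℝ) = (1-δ'') * (1/(1-δ'')) := by field_simp
        _ ≤ (1-δ'') * N := mul_le_mul_of_nonneg_left hNbig hδpos.le
    nlinarith
  obtain ⟨w, hw0, hwz, hwcov⟩ := hth N hN1 ⊤ hdeg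
  set v0 : Fin N := ⟨0, by omega⟩
  set v1 : Fin N := ⟨1, by omega⟩
  have hne : v0 ≠ v1 := by
    intro h
    have := congrArg Fin.val h
    simp [hN] at this
  have he : s(v0, v1) ∈ (⊤ : SimpleGraph (Fin N)).edgeSet := by
    rw [SimpleGraph.mem_edgeSet]
    exact hne
  have := hwcov _ he
  have hempty : Finset.univ.filter (fun H : SimpleGraph (Fin N) =>
      IsCopyOf F ⊤ H ∧ s(v0, v1) ∈ H.edgeSet) = ∅ := by
    rw [Finset.filter_eq_empty_iff]
    rintro H - ⟨⟨-, f, rfl⟩, hedge⟩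
    rw [map_edgeSet', hFempty] at hedge
    simp at hedge
  rw [hempty] at this
  simp at this
end Thresh

set_option maxHeartbeats 1000000 in
/-- **Seeded fractional decompositions.** For every graph `F` (on `k` vertices) and
`ε ∈ (0,1)` there are `σ ∈ (0,1)` and `n₀ ≥ 1` such that for every `n ≥ n₀`: every
`n`-vertex graph `G` with `δ(G) ≥ (δ*_F + ε)·n` has a fractional `F`-decomposition in
which every copy of `F` receives weight at least `σ / C(n−2, v(F)−2)`. -/
theorem seeded_frac_decomposition (k : ℕ) (F : SimpleGraph (Fin k))
    (ε : ℝ) (hε : ε ∈ Set.Ioo (0:ℝ) 1) :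
    ∃ σ ∈ Set.Ioo (0:ℝ) 1, ∃ n₀ : ℕ, 1 ≤ n₀ ∧ ∀ n : ℕ, n₀ ≤ n →
      ∀ G : SimpleGraph (Fin n),
        (∀ v, (fracFThreshold F + ε) * n ≤ (degOf G v : ℝ)) →
        ∃ w : SimpleGraph (Fin n) → ℝ, IsFracFDecomp F G w ∧
          ∀ H, IsCopyOf F G H →
            σ / (((n - 2).choose (k - 2) : ℕ) : ℝ) ≤ w H := by
  obtain ⟨hε0, hε1⟩ := hε
  by_cases hcase : 1 ≤ fracFThreshold F + ε
  · -- vacuous case: no graph can have minimum degree `≥ n`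
    refine ⟨1/2, by norm_num, 1, le_refl 1, fun n hn G hdeg => ?_⟩
    exfalso
    set v : Fin n := ⟨0, hn⟩
    have h1 := hdeg v
    have h2 : ((degOf G v : ℕ) : ℝ) ≤ (n:ℝ) - 1 := by
      calc ((degOf G v : ℕ):ℝ) ≤ ((n-1:ℕ):ℝ) := by exact_mod_cast degOf_le_pred G v
        _ = (n:ℝ) - 1 := by rw [Nat.cast_sub hn, Nat.cast_one]
    have hn1R : (1:ℝ) ≤ (n:ℝ) := by exact_mod_cast hn
    have h3 : (n:ℝ) ≤ (fracFThreshold F + ε) * n := by nlinarith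
    linarith
  · push_neg at hcase
    have hone := one_mem_TS F
    have hTSne : Set.Nonempty {δ : ℝ | δ ∈ Set.Icc (0:ℝ) 1 ∧ ∃ n₀ : ℕ, ∀ n : ℕ, n₀ ≤ n →
        ∀ G : SimpleGraph (Fin n),
          (∀ v, δ * n ≤ (degOf G v : ℝ)) → ∃ w, IsFracFDecomp F G w} := ⟨1, hone⟩
    have hlt : sInf {δ : ℝ | δ ∈ Set.Icc (0:ℝ) 1 ∧ ∃ n₀ : ℕ, ∀ n : ℕ, n₀ ≤ n →
        ∀ G : SimpleGraph (Fin n),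
          (∀ v, δ * n ≤ (degOf G v : ℝ)) → ∃ w, IsFracFDecomp F G w}
        < fracFThreshold F + ε/2 := by
      have hEq : fracFThreshold F = sInf {δ : ℝ | δ ∈ Set.Icc (0:ℝ) 1 ∧ ∃ n₀ : ℕ, ∀ n : ℕ,
          n₀ ≤ n → ∀ G : SimpleGraph (Fin n),
          (∀ v, δ * n ≤ (degOf G v : ℝ)) → ∃ w, IsFracFDecomp F G w} := rfl
      rw [← hEq]
      linarith
    obtain ⟨δ'', hδ''TS, hδ''lt⟩ := exists_lt_of_csInf_lt hTSne hlt
    obtain ⟨⟨hδ''0, -⟩, n₁, hth⟩ := hδ''TS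
    have hδ''1 : δ'' < 1 := by linarith
    obtain ⟨a0, b0, hab0⟩ := exists_adj_of_thresh F hδ''1 n₁ hth
    have hk2 : 2 ≤ k := by
      have hne := F.ne_of_adj hab0
      have h1 : (a0:ℕ) ≠ (b0:ℕ) := fun h => hne (Fin.ext h)
      have := a0.isLt
      have := b0.isLt
      omega
    -- constants
    set m : ℕ := F.edgeSet.ncard with hm
    have hm1 : 1 ≤ m := by
      have hne : F.edgeSet.Nonempty := ⟨s(a0,b0), hab0⟩
      have := (Set.ncard_pos (Set.toFinite _)).mpr hne
      omega
    set c₁ : ℕ := k * (2^k * (k-2).factorial) with hc₁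
    set c₂ : ℕ := m * (k^2 * (2^k * (k-2).factorial)) with hc₂
    have hc₁1 : 1 ≤ c₁ := by
      have : 0 < k * (2^k * (k-2).factorial) :=
        Nat.mul_pos (by omega) (Nat.mul_pos (Nat.pow_pos (by norm_num))
          (Nat.factorial_pos _))
      omega
    have hc₂1 : 1 ≤ c₂ := by
      have : 0 < m * (k^2 * (2^k * (k-2).factorial)) :=
        Nat.mul_pos (by omega) (Nat.mul_pos (by positivity)
          (Nat.mul_pos (Nat.pow_pos (by norm_num)) (Nat.factorial_pos _)))
      omega
    have hkR : (2:ℝ) ≤ (k:ℝ) := by exact_mod_cast hk2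
    have hkR0 : (0:ℝ) < (k:ℝ) := by linarith
    have hc₁R : (1:ℝ) ≤ (c₁:ℝ) := by exact_mod_cast hc₁1
    have hc₂R : (1:ℝ) ≤ (c₂:ℝ) := by exact_mod_cast hc₂1
    set σ : ℝ := ε / (64 * (k:ℝ)^2 * ((c₁:ℝ) + (c₂:ℝ) + 1)) with hσdef
    have hden0 : (0:ℝ) < 64 * (k:ℝ)^2 * ((c₁:ℝ) + (c₂:ℝ) + 1) := by positivity
    have hσ0 : 0 < σ := by rw [hσdef]; positivity
    have hden1 : (1:ℝ) ≤ 64 * (k:ℝ)^2 * ((c₁:ℝ) + (c₂:ℝ) + 1) := by nlinarith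
    have hσlt1 : σ < 1 := by
      have : σ ≤ ε := by
        rw [hσdef]
        calc ε / (64 * (k:ℝ)^2 * ((c₁:ℝ) + (c₂:ℝ) + 1)) ≤ ε / 1 := by
              apply div_le_div_of_nonneg_left hε0.le (by norm_num) hden1
          _ = ε := div_one ε
      linarith
    refine ⟨σ, ⟨hσ0, hσlt1⟩, max (max n₁ (k+2)) (⌈(32*(k:ℝ)^2)/ε⌉₊ + k + 3), ?_, ?_⟩
    · exact le_trans (by omega) (le_max_right _ _)
    intro n hn G hdeg
    have hn₁n : n₁ ≤ n := le_trans (le_trans (le_max_left _ _) (le_max_left _ _)) hn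
    have hnk2 : k + 2 ≤ n := le_trans (le_trans (le_max_right _ _) (le_max_left _ _)) hn
    have hnceil : ⌈(32*(k:ℝ)^2)/ε⌉₊ + k + 3 ≤ n := le_trans (le_max_right _ _) hn
    have hnR : (32:ℝ) * (k:ℝ)^2 ≤ ε * n := by
      have h1 : (32*(k:ℝ)^2)/ε ≤ (⌈(32*(k:ℝ)^2)/ε⌉₊ : ℝ) := Nat.le_ceil _
      have h2 : ((⌈(32*(k:ℝ)^2)/ε⌉₊ : ℕ) : ℝ) ≤ (n:ℝ) := by
        exact_mod_cast le_trans (by omega : ⌈(32*(k:ℝ)^2)/ε⌉₊ ≤ ⌈(32*(k:ℝ)^2)/ε⌉₊ + k + 3) hnceil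
      have h3 : (32*(k:ℝ)^2)/ε ≤ (n:ℝ) := le_trans h1 h2
      calc (32:ℝ)*(k:ℝ)^2 = ((32*(k:ℝ)^2)/ε) * ε := by field_simp
        _ ≤ (n:ℝ) * ε := mul_le_mul_of_nonneg_right h3 hε0.le
        _ = ε * n := by ring
    have hnn0 : (0:ℝ) ≤ (n:ℝ) := Nat.cast_nonneg n
    -- main objects
    set A : Finset (SimpleGraph (Fin n)) := Finset.univ.filter (fun H => IsCopyOf F G H) with hA
    set C : ℕ := (n-2).choose (k-2) with hCdef
    have hC1 : 1 ≤ C := Nat.choose_pos (by omega)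
    have hCR1 : (1:ℝ) ≤ (C:ℝ) := by exact_mod_cast hC1
    have hCR0 : (0:ℝ) < (C:ℝ) := by linarith
    set p : ℝ := 2*σ/(C:ℝ) with hpdef
    have hp0 : 0 ≤ p := by rw [hpdef]; positivity
    have hσ14 : σ ≤ 1/4 := by
      have h256 : (256:ℝ) ≤ 64 * (k:ℝ)^2 * ((c₁:ℝ) + (c₂:ℝ) + 1) := by nlinarith
      have : σ ≤ ε / 256 := by
        rw [hσdef]
        apply div_le_div_of_nonneg_left hε0.le (by norm_num) h256
      linarith
    have hp1 : p ≤ 1 := by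
      rw [hpdef]
      rw [div_le_one hCR0]
      linarith
    set D : ℕ := ⌊ε*(n:ℝ)/(2*(k:ℝ))⌋₊ with hDdef
    set prune : Finset (SimpleGraph (Fin n)) → Finset (SimpleGraph (Fin n)) := fun S =>
      S.filter (fun H' => IsCopyOf F G H' ∧
        (∀ H'' ∈ S, H'' ≠ H' → Disjoint H'.edgeSet H''.edgeSet) ∧
        (∀ v : Fin n, v ∈ H'.support →
          (S.filter (fun H'' => v ∈ H''.support)).card ≤ D)) with hprunedef
    have hpruneSub : ∀ S, prune S ⊆ S := fun S => Finset.filter_subset _ _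
    have hpruneCopy : ∀ S, ∀ H ∈ prune S, IsCopyOf F G H := by
      intro S H hH
      rw [hprunedef, Finset.mem_filter] at hH
      exact hH.2.1
    -- residual decompositions
    have hRdec : ∀ S : Finset (SimpleGraph (Fin n)),
        ∃ w', IsFracFDecomp F
          (G.deleteEdges (⋃ H ∈ ((prune S) : Set (SimpleGraph (Fin n))), H.edgeSet)) w' := by
      intro S
      apply hth n hn₁n
      intro v
      have hdel := degOf_delete_ge G (prune S) v
      have hloadcard : ((prune S).filter (fun H => v ∈ H.support)).card ≤ D := by
        by_cases hne : ((prune S).filter (fun H => v ∈ H.support)).Nonempty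
        · obtain ⟨H₀, hH₀⟩ := hne
          rw [Finset.mem_filter] at hH₀
          obtain ⟨hH₀p, hH₀v⟩ := hH₀
          have hH₀p' := hH₀p
          rw [hprunedef, Finset.mem_filter] at hH₀p'
          have hcond := hH₀p'.2.2.2 v hH₀v
          calc ((prune S).filter (fun H => v ∈ H.support)).card
              ≤ (S.filter (fun H => v ∈ H.support)).card :=
                Finset.card_le_card (Finset.filter_subset_filter _ (hpruneSub S))
            _ ≤ D := hcond
        · rw [Finset.not_nonempty_iff_eq_empty] at hne
          rw [hne]
          simp
      have hsumk : ∑ H ∈ (prune S).filter (fun H => v ∈ H.support),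
          (H.neighborSet v).ncard ≤ D * k := by
        calc ∑ H ∈ (prune S).filter (fun H => v ∈ H.support), (H.neighborSet v).ncard
            ≤ ∑ _H ∈ (prune S).filter (fun H => v ∈ H.support), k :=
              Finset.sum_le_sum (fun H hH => copy_neighbor_ncard
                (hpruneCopy S H (Finset.mem_of_mem_filter H hH)) v)
          _ = ((prune S).filter (fun H => v ∈ H.support)).card * k := by
              rw [Finset.sum_const, smul_eq_mul]
          _ ≤ D * k := Nat.mul_le_mul_right k hloadcard
      have hdegv := hdeg v
      have hDk : ((D:ℝ)) * k ≤ ε*n/2 := by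
        have hfl : (D:ℝ) ≤ ε*(n:ℝ)/(2*(k:ℝ)) := Nat.floor_le (by positivity)
        calc (D:ℝ)*k ≤ (ε*(n:ℝ)/(2*(k:ℝ)))*k := mul_le_mul_of_nonneg_right hfl hkR0.le
          _ = ε*n/2 := by field_simp
      have hdegnat : degOf G v ≤ degOf
          (G.deleteEdges (⋃ H ∈ ((prune S) : Set (SimpleGraph (Fin n))), H.edgeSet)) v
          + D * k := le_trans hdel (by omega)
      have hcast : (degOf G v : ℝ) ≤ (degOf
          (G.deleteEdges (⋃ H ∈ ((prune S) : Set (SimpleGraph (Fin n))), H.edgeSet)) v : ℝ)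
          + (D:ℝ) * (k:ℝ) := by exact_mod_cast hdegnat
      have e1 : δ'' * n ≤ (fracFThreshold F + ε/2) * n :=
        mul_le_mul_of_nonneg_right (le_of_lt hδ''lt) hnn0
      have e2 : (fracFThreshold F + ε/2) * n = (fracFThreshold F + ε)*n - ε*n/2 := by ring
      linarith
    set w' : Finset (SimpleGraph (Fin n)) → SimpleGraph (Fin n) → ℝ :=
      fun S => Classical.choose (hRdec S) with hw'def
    have hw'spec : ∀ S, IsFracFDecomp F
        (G.deleteEdges (⋃ H ∈ ((prune S) : Set (SimpleGraph (Fin n))), H.edgeSet)) (w' S) :=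
      fun S => Classical.choose_spec (hRdec S)
    set wS : Finset (SimpleGraph (Fin n)) → SimpleGraph (Fin n) → ℝ := fun S H =>
      (if H ∈ prune S then (1:ℝ) else 0) + w' S H with hwSdef
    have hwSdec : ∀ S, IsFracFDecomp F G (wS S) := by
      intro S
      apply seed_decomp F G (prune S) (hpruneCopy S) ?_ (w' S) (hw'spec S)
      intro H hH H' hH' hne
      have hH2 := hH
      rw [hprunedef, Finset.mem_filter] at hH2
      exact hH2.2.2.1 H' (hpruneSub S hH') hne.symm
    set w : SimpleGraph (Fin n) → ℝ := fun H => ∑ S ∈ A.powerset, probW p A S * wS S H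
      with hwdef
    have hPW0 : ∀ S, 0 ≤ probW p A S := fun S => probW_nonneg hp0 hp1 A S
    refine ⟨w, ⟨?_, ?_, ?_⟩, ?_⟩
    · intro H
      apply Finset.sum_nonneg
      intro S _
      exact mul_nonneg (hPW0 S) ((hwSdec S).1 H)
    · intro H hH
      apply Finset.sum_eq_zero
      intro S _
      rw [(hwSdec S).2.1 H hH, mul_zero]
    · intro e he
      calc ∑ H ∈ Finset.univ.filter (fun H => IsCopyOf F G H ∧ e ∈ H.edgeSet), w H
          = ∑ S ∈ A.powerset, ∑ H ∈ Finset.univ.filter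
              (fun H => IsCopyOf F G H ∧ e ∈ H.edgeSet), probW p A S * wS S H :=
            Finset.sum_comm
        _ = ∑ S ∈ A.powerset, probW p A S := by
            apply Finset.sum_congr rfl
            intro S _
            rw [← Finset.mul_sum, (hwSdec S).2.2 e he, mul_one]
        _ = 1 := sum_probW p A
    · intro H hHcopy
      have hHA : H ∈ A := by rw [hA, Finset.mem_filter]; exact ⟨Finset.mem_univ _, hHcopy⟩
      have hmono : ∑ S ∈ A.powerset, (if H ∈ prune S then probW p A S else 0) ≤ w H := by
        apply Finset.sum_le_sum
        intro S _
        by_cases hP : H ∈ prune S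
        · rw [if_pos hP]
          have hws : wS S H = 1 + w' S H := by rw [hwSdef]; simp [hP]
          have hw'0 : 0 ≤ w' S H := (hw'spec S).1 H
          calc probW p A S = probW p A S * 1 := (mul_one _).symm
            _ ≤ probW p A S * wS S H := by
                apply mul_le_mul_of_nonneg_left _ (hPW0 S)
                rw [hws]; linarith
        · rw [if_neg hP]
          exact mul_nonneg (hPW0 S) ((hwSdec S).1 H)
      set conflict : SimpleGraph (Fin n) → Prop :=
        fun H' => ¬ Disjoint H.edgeSet H'.edgeSet with hconfdef
      set QV : Finset (Fin n) := Finset.univ.filter (fun v => v ∈ H.support) with hQVdef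
      have hQVk : QV.card ≤ k := copy_suppFinset_card hHcopy
      have hprune_h : ∀ S, S ⊆ A → H ∈ S → (∀ H' ∈ S, H' ≠ H → ¬ conflict H') →
          (∀ v ∈ QV, ((S.filter (fun H'' => v ∈ H''.support)).card ≤ D)) → H ∈ prune S := by
        intro S hSA hHS hc hl
        rw [hprunedef, Finset.mem_filter]
        refine ⟨hHS, hHcopy, ?_, ?_⟩
        · intro H'' hH'' hne
          have := hc H'' hH'' hne
          rw [hconfdef] at this
          rwa [not_not] at this
        · intro v hv
          exact hl v (by rw [hQVdef, Finset.mem_filter]; exact ⟨Finset.mem_univ _, hv⟩)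
      -- counting bounds
      have hdFshift : n.descFactorial (k-2) ≤ 2^k * ((k-2).factorial * C) := by
        calc n.descFactorial (k-2) ≤ 2^(k-2) * (n-2).descFactorial (k-2) :=
              descFactorial_shift (k-2) n (by omega)
          _ ≤ 2^k * (n-2).descFactorial (k-2) :=
              Nat.mul_le_mul_right _ (Nat.pow_le_pow_right (by norm_num) (by omega))
          _ = 2^k * ((k-2).factorial * C) := by
              rw [Nat.descFactorial_eq_factorial_mul_choose]
      have hCfnat : ((A.erase H).filter conflict).card ≤ c₂ * C := by
        have hsub : (A.erase H).filter conflict ⊆ Finset.univ.filter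
            (fun H' : SimpleGraph (Fin n) =>
              IsCopyOf F G H' ∧ ¬ Disjoint H.edgeSet H'.edgeSet) := by
          intro H' hH'
          rw [Finset.mem_filter] at hH'
          obtain ⟨hH'e, hH'c⟩ := hH'
          have hH'A : H' ∈ A := Finset.mem_of_mem_erase hH'e
          rw [hA, Finset.mem_filter] at hH'A
          rw [Finset.mem_filter]
          exact ⟨Finset.mem_univ _, hH'A.2, hH'c⟩
        calc ((A.erase H).filter conflict).card
            ≤ (Finset.univ.filter (fun H' : SimpleGraph (Fin n) =>
                IsCopyOf F G H' ∧ ¬ Disjoint H.edgeSet H'.edgeSet)).card :=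
              Finset.card_le_card hsub
          _ ≤ F.edgeSet.ncard * (k ^ 2 * n.descFactorial (k - 2)) :=
              copy_conflict_count hHcopy
          _ ≤ m * (k ^ 2 * (2^k * ((k-2).factorial * C))) := by
              rw [← hm]
              exact Nat.mul_le_mul_left m (Nat.mul_le_mul_left _ hdFshift)
          _ = c₂ * C := by rw [hc₂]; ring
      have hCvnat : ∀ v : Fin n,
          (A.filter (fun H'' => v ∈ H''.support)).card ≤ c₁ * n * C := by
        intro v
        have hAf : A.filter (fun H'' => v ∈ H''.support)
            = Finset.univ.filter (fun H'' : SimpleGraph (Fin n) =>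
                IsCopyOf F G H'' ∧ v ∈ H''.support) := by
          rw [hA, Finset.filter_filter]
        have hdk1 : n.descFactorial (k-1) ≤ n * (2^k * ((k-2).factorial * C)) := by
          have hk1 : k - 1 = (k-2) + 1 := by omega
          rw [hk1, Nat.descFactorial_succ]
          calc (n - (k-2)) * n.descFactorial (k-2)
              ≤ n * n.descFactorial (k-2) :=
                Nat.mul_le_mul_right _ (Nat.sub_le _ _)
            _ ≤ n * (2^k * ((k-2).factorial * C)) := Nat.mul_le_mul_left n hdFshift
        calc (A.filter (fun H'' => v ∈ H''.support)).card
            = (Finset.univ.filter (fun H'' : SimpleGraph (Fin n) =>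
                IsCopyOf F G H'' ∧ v ∈ H''.support)).card := by rw [hAf]
          _ ≤ k * n.descFactorial (k-1) := copy_vertex_count F G v
          _ ≤ k * (n * (2^k * ((k-2).factorial * C))) := Nat.mul_le_mul_left k hdk1
          _ = c₁ * n * C := by rw [hc₁]; ring
      have hCf : (((A.erase H).filter conflict).card : ℝ) ≤ (c₂:ℝ) * (C:ℝ) := by
        have := hCfnat
        calc (((A.erase H).filter conflict).card : ℝ) ≤ ((c₂ * C : ℕ):ℝ) := by
              exact_mod_cast this
          _ = (c₂:ℝ) * (C:ℝ) := by push_cast; ring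
      have hCv : ∀ v ∈ QV, ((A.filter (fun H'' => v ∈ H''.support)).card : ℝ)
          ≤ (c₁:ℝ) * (n:ℝ) * (C:ℝ) := by
        intro v _
        calc ((A.filter (fun H'' => v ∈ H''.support)).card : ℝ) ≤ ((c₁ * n * C : ℕ):ℝ) := by
              exact_mod_cast hCvnat v
          _ = (c₁:ℝ) * (n:ℝ) * (C:ℝ) := by push_cast; ring
      have hCv0 : (0:ℝ) ≤ (c₁:ℝ) * (n:ℝ) * (C:ℝ) := by positivity
      have hCf' : ((@Finset.filter _ conflict
          (fun a => Classical.propDecidable (conflict a)) (A.erase H)).card : ℝ)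
          ≤ (c₂:ℝ) * (C:ℝ) := by
        rw [Finset.filter_congr_decidable]
        exact hCf
      have hbound := prune_prob_bound p hp0 hp1 A hHA conflict QV
        (fun v H'' => v ∈ H''.support) D prune (by convert hprune_h)
        ((c₂:ℝ) * (C:ℝ)) ((c₁:ℝ) * (n:ℝ) * (C:ℝ)) hCf' (by convert hCv) hCv0
      -- numeric conclusion
      have hD1R : ε*(n:ℝ)/(2*(k:ℝ)) ≤ (D:ℝ) + 1 := le_of_lt (Nat.lt_floor_add_one _)
      have hnum := final_numeric ε (k:ℝ) (c₁:ℝ) (c₂:ℝ) (C:ℝ) (D:ℝ) (n:ℝ) σ p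
        hε0 hε1.le hkR hc₁R hc₂R hCR1 hnR hD1R (Nat.cast_nonneg D) hσdef hpdef
      have hterm0 : 0 ≤ (p * (p * ((c₁:ℝ) * (n:ℝ) * (C:ℝ)) + 1)) / ((D:ℝ) + 1) := by
        positivity
      have hQVle : ((QV.card:ℕ):ℝ) ≤ (k:ℝ) := by exact_mod_cast hQVk
      have hmid : p - ((c₂:ℝ)*(C:ℝ)) * p ^ 2
          - (k:ℝ) * (p * (p * ((c₁:ℝ) * (n:ℝ) * (C:ℝ)) + 1)) / ((D:ℝ) + 1)
          ≤ p - ((c₂:ℝ)*(C:ℝ)) * p ^ 2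
          - (QV.card : ℝ) * (p * (p * ((c₁:ℝ) * (n:ℝ) * (C:ℝ)) + 1)) / ((D:ℝ) + 1) := by
        have h1 : (QV.card : ℝ) * (p * (p * ((c₁:ℝ) * (n:ℝ) * (C:ℝ)) + 1)) / ((D:ℝ) + 1)
            ≤ (k:ℝ) * (p * (p * ((c₁:ℝ) * (n:ℝ) * (C:ℝ)) + 1)) / ((D:ℝ) + 1) := by
          rw [div_le_div_iff_of_pos_right (by positivity)]
          exact mul_le_mul_of_nonneg_right hQVle (by positivity)
        linarith
      calc σ / (((n - 2).choose (k - 2) : ℕ) : ℝ)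
          = σ / (C:ℝ) := by rw [hCdef]
        _ ≤ p - ((c₂:ℝ)*(C:ℝ)) * p ^ 2
            - (k:ℝ) * (p * (p * ((c₁:ℝ) * (n:ℝ) * (C:ℝ)) + 1)) / ((D:ℝ) + 1) := hnum
        _ ≤ p - ((c₂:ℝ)*(C:ℝ)) * p ^ 2
            - (QV.card : ℝ) * (p * (p * ((c₁:ℝ) * (n:ℝ) * (C:ℝ)) + 1)) / ((D:ℝ) + 1) := hmid
        _ ≤ ∑ S ∈ A.powerset, (if H ∈ prune S then probW p A S else 0) := hbound
        _ ≤ w H := hmono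
end

section
/- Let G = (A, B) be a k-uniform bipartite hypergraph, i.e. a k-uniform hypergraph on vertex set A ∪ B in which every edge contains exactly one vertex of A. If for some integer D every vertex of A has degree at least 2ekD and every vertex of B has degree at most D, then G contains an A-perfect matching, i.e. a set of pairwise vertex-disjoint edges covering every vertex of A. -/
open Finset

section BipartiteHypergraphMatchingAux

variable {V : Type*} [Fintype V] [DecidableEq V]

private def goodSet (E : Finset (Finset V)) (U : Finset V) : Finset (V → Finset V) :=
  Finset.univ.filter (fun φ =>
    (∀ a ∈ U, φ a ∈ E ∧ a ∈ φ a) ∧ (∀ a, a ∉ U → φ a = ∅) ∧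
    (∀ a ∈ U, ∀ a' ∈ U, a ≠ a' → Disjoint (φ a) (φ a')))

private lemma mem_goodSet {E : Finset (Finset V)} {U : Finset V} {φ : V → Finset V} :
    φ ∈ goodSet E U ↔ (∀ a ∈ U, φ a ∈ E ∧ a ∈ φ a) ∧ (∀ a, a ∉ U → φ a = ∅) ∧
      (∀ a ∈ U, ∀ a' ∈ U, a ≠ a' → Disjoint (φ a) (φ a')) := by
  simp [goodSet]

private lemma sum_compat_le (E : Finset (Finset V)) (U : Finset V) (a : V) (ha : a ∉ U) :
    ∑ e ∈ E.filter (fun e => a ∈ e),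
        ((goodSet E U).filter (fun φ => ∀ a' ∈ U, Disjoint (φ a') e)).card
      ≤ (goodSet E (insert a U)).card := by
  rw [← Finset.card_sigma]
  apply Finset.card_le_card_of_injOn (fun p => Function.update p.2 a p.1)
  · rintro ⟨e, φ⟩ hp
    simp only [Finset.mem_coe, Finset.mem_sigma, Finset.mem_filter] at hp ⊢
    obtain ⟨⟨heE, hae⟩, ⟨hφ, hcompat⟩⟩ := hp
    rw [mem_goodSet] at hφ ⊢
    obtain ⟨h1, h2, h3⟩ := hφ
    refine ⟨?_, ?_, ?_⟩
    · intro x hx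
      rcases Finset.mem_insert.mp hx with rfl | hxU
      · simpa using ⟨heE, hae⟩
      · have hxa : x ≠ a := fun h => ha (h ▸ hxU)
        rw [Function.update_of_ne hxa]
        exact h1 x hxU
    · intro x hx
      have hxa : x ≠ a := fun h => hx (h ▸ Finset.mem_insert_self a U)
      rw [Function.update_of_ne hxa]
      exact h2 x (fun h => hx (Finset.mem_insert_of_mem h))
    · intro x hx y hy hxy
      rcases Finset.mem_insert.mp hx with rfl | hxU <;>
        rcases Finset.mem_insert.mp hy with rfl | hyU
      · exact absurd rfl hxy
      · have hya : y ≠ x := fun h => ha (h ▸ hyU)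
        rw [Function.update_self, Function.update_of_ne hya]
        exact (hcompat y hyU).symm
      · have hxa : x ≠ y := fun h => ha (h ▸ hxU)
        rw [Function.update_self, Function.update_of_ne hxa]
        exact hcompat x hxU
      · have hxa : x ≠ a := fun h => ha (h ▸ hxU)
        have hya : y ≠ a := fun h => ha (h ▸ hyU)
        rw [Function.update_of_ne hxa, Function.update_of_ne hya]
        exact h3 x hxU y hyU hxy
  · rintro ⟨e, φ⟩ hp ⟨e', φ'⟩ hq h
    simp only [Finset.mem_coe, Finset.mem_sigma, Finset.mem_filter] at hp hq
    have he : e = e' := by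
      have := congrFun h a
      simpa using this
    subst he
    have hφ : φ = φ' := by
      funext x
      by_cases hxa : x = a
      · subst hxa
        rw [(mem_goodSet.mp hp.2.1).2.1 x ha, (mem_goodSet.mp hq.2.1).2.1 x ha]
      · have := congrFun h x
        simp only [Function.update_of_ne hxa] at this
        exact this
    subst hφ
    rfl

private lemma card_fixed_le (E : Finset (Finset V)) (U : Finset V) (a' : V) (ha' : a' ∈ U)
    (f : Finset V) :
    ((goodSet E U).filter (fun φ => φ a' = f)).card ≤ (goodSet E (U.erase a')).card := by
  apply Finset.card_le_card_of_injOn (fun φ => Function.update φ a' ∅)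
  · intro φ hφ
    simp only [Finset.mem_coe, Finset.mem_filter] at hφ ⊢
    obtain ⟨hφ, hval⟩ := hφ
    rw [mem_goodSet] at hφ ⊢
    obtain ⟨h1, h2, h3⟩ := hφ
    refine ⟨?_, ?_, ?_⟩
    · intro x hx
      have hxa : x ≠ a' := (Finset.mem_erase.mp hx).1
      rw [Function.update_of_ne hxa]
      exact h1 x (Finset.mem_erase.mp hx).2
    · intro x hx
      by_cases hxa : x = a'
      · subst hxa; rw [Function.update_self]
      · rw [Function.update_of_ne hxa]
        exact h2 x (fun hxU => hx (Finset.mem_erase.mpr ⟨hxa, hxU⟩))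
    · intro x hx y hy hxy
      have hxa : x ≠ a' := (Finset.mem_erase.mp hx).1
      have hya : y ≠ a' := (Finset.mem_erase.mp hy).1
      rw [Function.update_of_ne hxa, Function.update_of_ne hya]
      exact h3 x (Finset.mem_erase.mp hx).2 y (Finset.mem_erase.mp hy).2 hxy
  · intro φ hφ ψ hψ h
    simp only [Finset.mem_coe, Finset.mem_filter] at hφ hψ
    funext x
    by_cases hxa : x = a'
    · subst hxa; rw [hφ.2, hψ.2]
    · have := congrFun h x
      simp only [Function.update_of_ne hxa] at this
      exact this

private lemma conflict_count {A B : Finset V} {E : Finset (Finset V)} {k D : ℕ}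
    (hedges : ∀ e ∈ E, e ⊆ A ∪ B ∧ e.card = k ∧ (e ∩ A).card = 1)
    (hdegB : ∀ b ∈ B, (E.filter (fun e => b ∈ e)).card ≤ D)
    {U : Finset V} (hUA : U ⊆ A) {a : V} (haA : a ∈ A) (haU : a ∉ U)
    {e : Finset V} (he : e ∈ E) (hae : a ∈ e) :
    ∑ a' ∈ U, (E.filter (fun f => a' ∈ f ∧ ¬ Disjoint f e)).card ≤ k * D := by
  have hsingle : ∀ f ∈ E, ∀ x ∈ f ∩ A, ∀ y ∈ f ∩ A, x = y := by
    intro f hf x hx y hy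
    obtain ⟨z, hz⟩ := Finset.card_eq_one.mp (hedges f hf).2.2
    rw [hz] at hx hy
    rw [Finset.mem_singleton.mp hx, Finset.mem_singleton.mp hy]
  rw [← Finset.card_biUnion]
  · calc (U.biUnion fun a' => E.filter (fun f => a' ∈ f ∧ ¬ Disjoint f e)).card
        ≤ ((e ∩ B).biUnion (fun b => E.filter (fun f => b ∈ f))).card := by
          apply Finset.card_le_card
          intro f hf
          simp only [Finset.mem_biUnion, Finset.mem_filter] at hf ⊢
          obtain ⟨a', ha'U, hfE, ha'f, hnd⟩ := hf
          obtain ⟨x, hxf, hxe⟩ := Finset.not_disjoint_iff.mp hnd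
          have hxB : x ∈ B := by
            rcases Finset.mem_union.mp ((hedges e he).1 hxe) with hxA | hxB
            · exfalso
              have hxa : x = a := hsingle e he x (Finset.mem_inter.mpr ⟨hxe, hxA⟩)
                a (Finset.mem_inter.mpr ⟨hae, haA⟩)
              have hxa' : x = a' := hsingle f hfE x (Finset.mem_inter.mpr ⟨hxf, hxa ▸ haA⟩)
                a' (Finset.mem_inter.mpr ⟨ha'f, hUA ha'U⟩)
              exact haU (hxa ▸ hxa' ▸ ha'U)
            · exact hxB
          exact ⟨x, Finset.mem_inter.mpr ⟨hxe, hxB⟩, hfE, hxf⟩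
      _ ≤ ∑ b ∈ e ∩ B, (E.filter (fun f => b ∈ f)).card := Finset.card_biUnion_le
      _ ≤ ∑ _b ∈ e ∩ B, D := by
          apply Finset.sum_le_sum
          intro b hb
          exact hdegB b (Finset.mem_inter.mp hb).2
      _ = (e ∩ B).card * D := by rw [Finset.sum_const, smul_eq_mul]
      _ ≤ k * D := by
          apply Nat.mul_le_mul_right
          calc (e ∩ B).card ≤ e.card := Finset.card_le_card (Finset.inter_subset_left)
            _ = k := (hedges e he).2.1
  · intro x hx y hy hxy
    simp only [Finset.disjoint_left, Finset.mem_filter]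
    rintro f ⟨hfE, hxf, -⟩ ⟨-, hyf, -⟩
    exact hxy (hsingle f hfE x (Finset.mem_inter.mpr ⟨hxf, hUA hx⟩)
      y (Finset.mem_inter.mpr ⟨hyf, hUA hy⟩))

private lemma key_step {A B : Finset V} {E : Finset (Finset V)} {k D : ℕ}
    (hk : 1 ≤ k) (hD : 1 ≤ D)
    (hedges : ∀ e ∈ E, e ⊆ A ∪ B ∧ e.card = k ∧ (e ∩ A).card = 1)
    (hdegA : ∀ a ∈ A, 4 * k * D ≤ (E.filter (fun e => a ∈ e)).card)
    (hdegB : ∀ b ∈ B, (E.filter (fun e => b ∈ e)).card ≤ D) :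
    ∀ (n : ℕ) (U : Finset V), U.card ≤ n → U ⊆ A → ∀ a ∈ A, a ∉ U →
      (E.filter (fun e => a ∈ e)).card * (goodSet E U).card
        ≤ 2 * (goodSet E (insert a U)).card := by
  intro n
  induction n using Nat.strong_induction_on with
  | _ n ih =>
  intro U hUn hUA a haA haU
  have hterm : ∀ a' ∈ U, ∀ f : Finset V,
      2 * k * D * ((goodSet E U).filter (fun φ => φ a' = f)).card
        ≤ (goodSet E U).card := by
    intro a' ha'U f
    have hUpos : 1 ≤ U.card := Finset.card_pos.mpr ⟨a', ha'U⟩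
    have hn1 : n - 1 < n := by omega
    have hih := ih (n - 1) hn1 (U.erase a')
      (by rw [Finset.card_erase_of_mem ha'U]; omega)
      ((Finset.erase_subset a' U).trans hUA) a' (hUA ha'U) (Finset.notMem_erase a' U)
    rw [Finset.insert_erase ha'U] at hih
    have h4 : 4 * k * D * (goodSet E (U.erase a')).card ≤ 2 * (goodSet E U).card :=
      le_trans (Nat.mul_le_mul_right _ (hdegA a' (hUA ha'U))) hih
    have h2 : 2 * k * D * (goodSet E (U.erase a')).card ≤ (goodSet E U).card := by
      refine Nat.le_of_mul_le_mul_left ?_ (show 0 < 2 by norm_num)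
      calc 2 * (2 * k * D * (goodSet E (U.erase a')).card)
          = 4 * k * D * (goodSet E (U.erase a')).card := by ring
        _ ≤ 2 * (goodSet E U).card := h4
    exact le_trans (Nat.mul_le_mul_left _ (card_fixed_le E U a' ha'U f)) h2
  have key : ∀ e ∈ E.filter (fun e => a ∈ e),
      (goodSet E U).card
        ≤ 2 * ((goodSet E U).filter (fun φ => ∀ a' ∈ U, Disjoint (φ a') e)).card := by
    intro e he'
    rw [Finset.mem_filter] at he'
    obtain ⟨heE, hae⟩ := he'
    have hsplit : ((goodSet E U).filter (fun φ => ∀ a' ∈ U, Disjoint (φ a') e)).card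
        + ((goodSet E U).filter (fun φ => ¬ ∀ a' ∈ U, Disjoint (φ a') e)).card
        = (goodSet E U).card :=
      Finset.card_filter_add_card_filter_not _
    have hcover : (goodSet E U).filter (fun φ => ¬ ∀ a' ∈ U, Disjoint (φ a') e)
        ⊆ U.biUnion (fun a' =>
          (E.filter (fun f => a' ∈ f ∧ ¬ Disjoint f e)).biUnion
            (fun f => (goodSet E U).filter (fun φ => φ a' = f))) := by
      intro φ hφ
      rw [Finset.mem_filter] at hφ
      obtain ⟨hφG, hφbad⟩ := hφ
      push_neg at hφbad
      obtain ⟨a', ha'U, hnd⟩ := hφbad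
      have h1 := (mem_goodSet.mp hφG).1 a' ha'U
      simp only [Finset.mem_biUnion, Finset.mem_filter]
      exact ⟨a', ha'U, φ a', ⟨h1.1, h1.2, hnd⟩, ⟨hφG, rfl⟩⟩
    have hbadle : ((goodSet E U).filter (fun φ => ¬ ∀ a' ∈ U, Disjoint (φ a') e)).card
        ≤ ∑ a' ∈ U, ∑ f ∈ E.filter (fun f => a' ∈ f ∧ ¬ Disjoint f e),
            ((goodSet E U).filter (fun φ => φ a' = f)).card := by
      refine le_trans (Finset.card_le_card hcover) ?_
      refine le_trans Finset.card_biUnion_le ?_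
      exact Finset.sum_le_sum (fun a' _ => Finset.card_biUnion_le)
    have hbad2 : 2 * k * D
          * ((goodSet E U).filter (fun φ => ¬ ∀ a' ∈ U, Disjoint (φ a') e)).card
        ≤ k * D * (goodSet E U).card := by
      calc 2 * k * D * ((goodSet E U).filter (fun φ => ¬ ∀ a' ∈ U, Disjoint (φ a') e)).card
          ≤ 2 * k * D * ∑ a' ∈ U, ∑ f ∈ E.filter (fun f => a' ∈ f ∧ ¬ Disjoint f e),
              ((goodSet E U).filter (fun φ => φ a' = f)).card :=
            Nat.mul_le_mul_left _ hbadle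
        _ = ∑ a' ∈ U, ∑ f ∈ E.filter (fun f => a' ∈ f ∧ ¬ Disjoint f e),
              2 * k * D * ((goodSet E U).filter (fun φ => φ a' = f)).card := by
            rw [Finset.mul_sum]; exact Finset.sum_congr rfl (fun _ _ => Finset.mul_sum _ _ _)
        _ ≤ ∑ a' ∈ U, ∑ _f ∈ E.filter (fun f => a' ∈ f ∧ ¬ Disjoint f e),
              (goodSet E U).card := by
            exact Finset.sum_le_sum (fun a' ha' =>
              Finset.sum_le_sum (fun f _ => hterm a' ha' f))
        _ = (∑ a' ∈ U, (E.filter (fun f => a' ∈ f ∧ ¬ Disjoint f e)).card)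
              * (goodSet E U).card := by
            rw [Finset.sum_mul]
            exact Finset.sum_congr rfl (fun a' _ => by
              rw [Finset.sum_const, smul_eq_mul])
        _ ≤ k * D * (goodSet E U).card :=
            Nat.mul_le_mul_right _ (conflict_count hedges hdegB hUA haA haU heE hae)
    have hbad : 2 * ((goodSet E U).filter (fun φ => ¬ ∀ a' ∈ U, Disjoint (φ a') e)).card
        ≤ (goodSet E U).card := by
      have hkD : 0 < k * D := Nat.mul_pos hk hD
      refine Nat.le_of_mul_le_mul_left ?_ hkD
      calc k * D * (2 * ((goodSet E U).filter
              (fun φ => ¬ ∀ a' ∈ U, Disjoint (φ a') e)).card)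
          = 2 * k * D * ((goodSet E U).filter
              (fun φ => ¬ ∀ a' ∈ U, Disjoint (φ a') e)).card := by ring
        _ ≤ k * D * (goodSet E U).card := hbad2
    rw [← hsplit] at hbad ⊢
    rw [two_mul] at hbad
    have hbc := Nat.le_of_add_le_add_right hbad
    calc ((goodSet E U).filter (fun φ => ∀ a' ∈ U, Disjoint (φ a') e)).card
          + ((goodSet E U).filter (fun φ => ¬ ∀ a' ∈ U, Disjoint (φ a') e)).card
        ≤ ((goodSet E U).filter (fun φ => ∀ a' ∈ U, Disjoint (φ a') e)).card
          + ((goodSet E U).filter (fun φ => ∀ a' ∈ U, Disjoint (φ a') e)).card :=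
          Nat.add_le_add_left hbc _
      _ = 2 * ((goodSet E U).filter (fun φ => ∀ a' ∈ U, Disjoint (φ a') e)).card :=
          (two_mul _).symm
  calc (E.filter (fun e => a ∈ e)).card * (goodSet E U).card
      = ∑ _e ∈ E.filter (fun e => a ∈ e), (goodSet E U).card := by
        rw [Finset.sum_const, smul_eq_mul]
    _ ≤ ∑ e ∈ E.filter (fun e => a ∈ e),
          2 * ((goodSet E U).filter (fun φ => ∀ a' ∈ U, Disjoint (φ a') e)).card :=
        Finset.sum_le_sum key
    _ = 2 * ∑ e ∈ E.filter (fun e => a ∈ e),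
          ((goodSet E U).filter (fun φ => ∀ a' ∈ U, Disjoint (φ a') e)).card := by
        rw [Finset.mul_sum]
    _ ≤ 2 * (goodSet E (insert a U)).card :=
        Nat.mul_le_mul_left _ (sum_compat_le E U a haU)

private lemma good_pos {A B : Finset V} {E : Finset (Finset V)} {k D : ℕ}
    (hk : 1 ≤ k) (hD : 1 ≤ D)
    (hedges : ∀ e ∈ E, e ⊆ A ∪ B ∧ e.card = k ∧ (e ∩ A).card = 1)
    (hdegA : ∀ a ∈ A, 4 * k * D ≤ (E.filter (fun e => a ∈ e)).card)
    (hdegB : ∀ b ∈ B, (E.filter (fun e => b ∈ e)).card ≤ D) :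
    ∀ U : Finset V, U ⊆ A → 0 < (goodSet E U).card := by
  intro U
  induction U using Finset.induction_on with
  | empty =>
    intro _
    refine Finset.card_pos.mpr ⟨fun _ => ∅, ?_⟩
    rw [mem_goodSet]
    refine ⟨?_, ?_, ?_⟩ <;> simp
  | insert a U haU ihU =>
    intro hins
    have haA : a ∈ A := hins (Finset.mem_insert_self a U)
    have hUA : U ⊆ A := fun x hx => hins (Finset.mem_insert_of_mem hx)
    have hU := ihU hUA
    have hkey := key_step hk hD hedges hdegA hdegB U.card U le_rfl hUA a haA haU
    have hdeg : 0 < (E.filter (fun e => a ∈ e)).card :=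
      lt_of_lt_of_le (by positivity) (hdegA a haA)
    have : 0 < (E.filter (fun e => a ∈ e)).card * (goodSet E U).card :=
      Nat.mul_pos hdeg hU
    omega


end BipartiteHypergraphMatchingAux

/-- **Bipartite hypergraph matching (Alon).** Let `G = (A,B)` be a `k`-uniform bipartite
hypergraph (every edge meets `A` in exactly one vertex). If for some integer `D` every
vertex of `A` has degree at least `2ekD` and every vertex of `B` has degree at most `D`,
then `G` contains an `A`-perfect matching. -/
theorem bipartite_hypergraph_matching (V : Type*) [Fintype V] [DecidableEq V]
    (A B : Finset V) (hAB : Disjoint A B) (E : Finset (Finset V))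
    (k D : ℕ) (hk : 1 ≤ k) (hD : 1 ≤ D)
    (hedges : ∀ e ∈ E, e ⊆ A ∪ B ∧ e.card = k ∧ (e ∩ A).card = 1)
    (hdegA : ∀ a ∈ A, 2 * Real.exp 1 * k * D ≤ ((E.filter (fun e => a ∈ e)).card : ℝ))
    (hdegB : ∀ b ∈ B, (E.filter (fun e => b ∈ e)).card ≤ D) :
    ∃ M ⊆ E, (∀ e₁ ∈ M, ∀ e₂ ∈ M, e₁ ≠ e₂ → Disjoint e₁ e₂) ∧
      ∀ a ∈ A, ∃ e ∈ M, a ∈ e := by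
  have hdegA' : ∀ a ∈ A, 4 * k * D ≤ (E.filter (fun e => a ∈ e)).card := by
    intro a ha
    have h := hdegA a ha
    have he2 : (2:ℝ) ≤ Real.exp 1 := by
      have := Real.exp_one_gt_d9
      linarith
    have hk' : (1:ℝ) ≤ (k:ℝ) := by exact_mod_cast hk
    have hD' : (1:ℝ) ≤ (D:ℝ) := by exact_mod_cast hD
    have h4 : ((4 * k * D : ℕ) : ℝ) ≤ 2 * Real.exp 1 * k * D := by
      push_cast
      have h4 : (4:ℝ) ≤ 2 * Real.exp 1 := by linarith
      have hk0 : (0:ℝ) ≤ (k:ℝ) := by positivity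
      have hD0 : (0:ℝ) ≤ (D:ℝ) := by positivity
      exact mul_le_mul_of_nonneg_right (mul_le_mul_of_nonneg_right h4 hk0) hD0
    exact_mod_cast h4.trans h
  obtain ⟨φ, hφ⟩ := Finset.card_pos.mp (good_pos hk hD hedges hdegA' hdegB A le_rfl)
  rw [mem_goodSet] at hφ
  obtain ⟨h1, h2, h3⟩ := hφ
  refine ⟨A.image φ, ?_, ?_, ?_⟩
  · intro e he
    obtain ⟨a, haA, rfl⟩ := Finset.mem_image.mp he
    exact (h1 a haA).1
  · intro e₁ he₁ e₂ he₂ hne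
    obtain ⟨a₁, ha₁, rfl⟩ := Finset.mem_image.mp he₁
    obtain ⟨a₂, ha₂, rfl⟩ := Finset.mem_image.mp he₂
    have : a₁ ≠ a₂ := fun h => hne (h ▸ rfl)
    exact h3 a₁ ha₁ a₂ ha₂ this
  · intro a haA
    exact ⟨φ a, Finset.mem_image_of_mem φ haA, (h1 a haA).2⟩
end

section
/- For every real ε ∈ (0,1) and integer d ≥ 2, there exists γ ∈ (0,1) such that the following holds for every fixed graph W and every sufficiently large n. Let G be a graph on n vertices with minimum degree at least (1 − 1/d + ε)·n, let H be a subgraph of G, and let W be a supergraph of H whose degeneracy rooted at V(H) is at most d. Then there are at least (γ·n)^{|V(W)∖V(H)|} embeddings of W into G, i.e. injective maps φ : V(W) → V(G) that fix every vertex of V(H) and map every edge of W to an edge of G. -/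
open Finset
open scoped Classical

noncomputable section

/-- The degeneracy of `W` rooted at `U` is at most `d`: there is an ordering of the
vertices outside `U` in which every vertex has at most `d` neighbours among `U` and the
earlier vertices. -/
def RootedDegAtMost {α : Type*} (W : SimpleGraph α) (U : Set α) (d : ℕ) : Prop :=
  ∃ l : List α, l.Nodup ∧ (∀ x : α, x ∈ l ↔ x ∉ U) ∧
    ∀ (i : ℕ) (hi : i < l.length),
      (W.neighborSet (l.get ⟨i, hi⟩) ∩ (U ∪ {x | x ∈ l.take i})).ncard ≤ d

end

set_option maxHeartbeats 8000000 in
/-- **Embedding rooted graphs of bounded degeneracy.** For every `ε ∈ (0,1)` and integer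
`d ≥ 2` there is `γ ∈ (0,1)` such that for every fixed graph `W` with root set `R` whose
degeneracy rooted at `R` is at most `d`, and every sufficiently large `n`: if `G` is an
`n`-vertex graph with `δ(G) ≥ (1 − 1/d + ε)·n` and `ι` places the root `R` into `G` (so
that the rooted subgraph `H`, the restriction of `W` to `R`, becomes a subgraph of `G`),
then there are at least `(γ·n)^{|V(W)∖R|}` embeddings of `W` into `G` fixing the root. -/
theorem degeneracy_embedding (ε : ℝ) (hε : ε ∈ Set.Ioo (0:ℝ) 1) (d : ℕ) (hd : 2 ≤ d) :
    ∃ γ ∈ Set.Ioo (0:ℝ) 1,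
      ∀ (N : ℕ) (W : SimpleGraph (Fin N)) (R : Finset (Fin N)),
        RootedDegAtMost W (↑R) d →
        ∃ n₀ : ℕ, ∀ n : ℕ, n₀ ≤ n →
          ∀ G : SimpleGraph (Fin n),
            (∀ v, (1 - 1 / (d:ℝ) + ε) * n ≤ (degOf G v : ℝ)) →
            ∀ ι : Fin N → Fin n, Set.InjOn ι (↑R) →
              (∀ u ∈ R, ∀ v ∈ R, W.Adj u v → G.Adj (ι u) (ι v)) →
              (γ * n) ^ (N - R.card) ≤
                (({φ : Fin N → Fin n | Function.Injective φ ∧ (∀ v ∈ R, φ v = ι v) ∧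
                    ∀ u v, W.Adj u v → G.Adj (φ u) (φ v)}).ncard : ℝ) := by
  obtain ⟨hε0, hε1⟩ := hε
  refine ⟨ε, ⟨hε0, hε1⟩, ?_⟩
  intro N W R hdeg
  obtain ⟨l, hnd, hmem, hbound⟩ := hdeg
  refine ⟨⌈(N:ℝ)/ε⌉₊ + 1, ?_⟩
  intro n hn G hG ι hι hιadj
  have hn1 : 1 ≤ n := le_trans (Nat.le_add_left 1 _) hn
  have hnR : (0:ℝ) < n := by exact_mod_cast hn1
  have hd2 : (2:ℝ) ≤ (d:ℝ) := by exact_mod_cast hd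
  have hdR : (0:ℝ) < (d:ℝ) := by linarith
  have hNn : (N:ℝ) ≤ ε * n := by
    have h1 : (N:ℝ)/ε ≤ (⌈(N:ℝ)/ε⌉₊ : ℝ) := Nat.le_ceil _
    have h2 : ((⌈(N:ℝ)/ε⌉₊ + 1 : ℕ) : ℝ) ≤ n := by exact_mod_cast hn
    push_cast at h2
    rw [div_le_iff₀ hε0] at h1
    nlinarith
  -- degrees are at most n, hence ε ≤ 1/d
  have hdegle : ∀ v : Fin n, (degOf G v : ℝ) ≤ n := by
    intro v
    have : (G.neighborSet v).ncard ≤ n := by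
      have := Set.ncard_le_ncard (Set.subset_univ (G.neighborSet v)) Set.finite_univ
      simpa [Set.ncard_univ] using this
    exact_mod_cast this
  have hεd : ε ≤ 1 / (d:ℝ) := by
    have h1 := hG ⟨0, hn1⟩
    have h2 := hdegle ⟨0, hn1⟩
    nlinarith
  set v₀ : Fin n := ⟨0, hn1⟩ with hv₀
  set k := l.length with hk
  -- cardinality bookkeeping
  have hlcard : l.toFinset.card = k := List.toFinset_card_of_nodup hnd
  have hcover : R ∪ l.toFinset = Finset.univ := by
    ext y
    simp only [Finset.mem_union, List.mem_toFinset, Finset.mem_univ, iff_true]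
    by_cases hy : y ∈ R
    · exact Or.inl hy
    · exact Or.inr ((hmem y).mpr (by simpa using hy))
  have hdisj : Disjoint R l.toFinset := by
    rw [Finset.disjoint_left]
    intro a haR hal
    exact (hmem a).mp (by simpa using hal) (by simpa using haR)
  have hkcard : R.card + k = N := by
    have := Finset.card_union_of_disjoint hdisj
    rw [hcover] at this
    simp only [Finset.card_univ, Fintype.card_fin] at this
    omega
  -- the nested finsets
  have hxnotin : ∀ (i : ℕ) (hi : i < k), l.get ⟨i, hi⟩ ∉ R ∪ (l.take i).toFinset := by
    intro i hi
    simp only [Finset.mem_union, List.mem_toFinset]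
    rintro (h | h)
    · exact (hmem _).mp (l.get_mem ⟨i, hi⟩) (by simpa using h)
    · rw [List.mem_take_iff_getElem] at h
      obtain ⟨j, hj, he⟩ := h
      rw [List.get_eq_getElem] at he
      have := hnd.getElem_inj_iff.mp he
      simp at this
      omega
  have hDsucc : ∀ (i : ℕ) (hi : i < k),
      R ∪ (l.take (i+1)).toFinset = insert (l.get ⟨i, hi⟩) (R ∪ (l.take i).toFinset) := by
    intro i hi
    have ht : l.take (i+1) = l.take i ++ [l.get ⟨i, hi⟩] := by
      rw [List.take_succ]
      simp [List.getElem?_eq_getElem hi]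
    rw [ht]
    ext y
    simp only [Finset.mem_union, List.mem_toFinset, List.mem_append, List.mem_singleton,
      Finset.mem_insert]
    tauto
  have hDcard : ∀ i : ℕ, ((R ∪ (l.take i).toFinset).card : ℝ) ≤ R.card + i := by
    intro i
    have h1 := Finset.card_union_le R (l.take i).toFinset
    have h2 : (l.take i).toFinset.card ≤ (l.take i).length := (l.take i).toFinset_card_le
    have h3 : (l.take i).length ≤ i := by simp [List.length_take]
    have : (R ∪ (l.take i).toFinset).card ≤ R.card + i := by omega
    exact_mod_cast this
  -- the main induction
  have key : ∀ i : ℕ, i ≤ k →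
      (ε * n) ^ i ≤ (((Finset.univ : Finset (Fin N → Fin n)).filter (fun φ =>
        (∀ v ∈ R, φ v = ι v) ∧ Set.InjOn φ ↑(R ∪ (l.take i).toFinset) ∧
        (∀ u ∈ R ∪ (l.take i).toFinset, ∀ v ∈ R ∪ (l.take i).toFinset,
          W.Adj u v → G.Adj (φ u) (φ v)) ∧
        ∀ x, x ∉ R ∪ (l.take i).toFinset → φ x = v₀)).card : ℝ) := by
    intro i
    induction i with
    | zero =>
      intro _
      have hmem0 : (fun y => if y ∈ R then ι y else v₀) ∈
          (Finset.univ : Finset (Fin N → Fin n)).filter (fun φ =>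
            (∀ v ∈ R, φ v = ι v) ∧ Set.InjOn φ ↑(R ∪ (l.take 0).toFinset) ∧
            (∀ u ∈ R ∪ (l.take 0).toFinset, ∀ v ∈ R ∪ (l.take 0).toFinset,
              W.Adj u v → G.Adj (φ u) (φ v)) ∧
            ∀ x, x ∉ R ∪ (l.take 0).toFinset → φ x = v₀) := by
        simp only [Finset.mem_filter, Finset.mem_univ, true_and, List.take_zero,
          List.toFinset_nil, Finset.union_empty]
        refine ⟨fun v hv => if_pos hv, ?_, ?_, fun x hx => if_neg hx⟩
        · intro a ha b hb hab
          simp only [Finset.mem_coe] at ha hb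
          have hab' : ι a = ι b := by simpa [ha, hb] using hab
          exact hι ha hb hab'
        · intro u hu v hv huv
          rw [if_pos hu, if_pos hv]
          exact hιadj u hu v hv huv
      have : 0 < ((Finset.univ : Finset (Fin N → Fin n)).filter _).card :=
        Finset.card_pos.mpr ⟨_, hmem0⟩
      rw [pow_zero]
      exact_mod_cast this
    | succ i ih =>
      intro hik
      have hi : i < k := hik
      have ihv := ih (le_of_lt hi)
      set x := l.get ⟨i, hi⟩ with hx
      set Di := R ∪ (l.take i).toFinset with hDi
      set Si := (Finset.univ : Finset (Fin N → Fin n)).filter (fun φ =>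
        (∀ v ∈ R, φ v = ι v) ∧ Set.InjOn φ ↑Di ∧
        (∀ u ∈ Di, ∀ v ∈ Di, W.Adj u v → G.Adj (φ u) (φ v)) ∧
        ∀ y, y ∉ Di → φ y = v₀) with hSi
      set Si' := (Finset.univ : Finset (Fin N → Fin n)).filter (fun φ =>
        (∀ v ∈ R, φ v = ι v) ∧ Set.InjOn φ ↑(R ∪ (l.take (i+1)).toFinset) ∧
        (∀ u ∈ R ∪ (l.take (i+1)).toFinset, ∀ v ∈ R ∪ (l.take (i+1)).toFinset,
          W.Adj u v → G.Adj (φ u) (φ v)) ∧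
        ∀ y, y ∉ R ∪ (l.take (i+1)).toFinset → φ y = v₀) with hSi'
      have hxD : x ∉ Di := hxnotin i hi
      have hxR : x ∉ R := by
        intro h; exact hxD (Finset.mem_union_left _ h)
      have hneD : ∀ y : Fin N, y ∈ Di → y ≠ x := by
        intro y hy h; rw [h] at hy; exact hxD hy
      have hneD' : ∀ y : Fin N, y ∈ (↑Di : Set (Fin N)) → y ≠ x := by
        intro y hy; exact hneD y (Finset.mem_coe.mp hy)
      have hneR : ∀ v : Fin N, v ∈ R → v ≠ x := by
        intro v hv h; rw [h] at hv; exact hxR hv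
      have hDs : R ∪ (l.take (i+1)).toFinset = insert x Di := hDsucc i hi
      -- the number of neighbours of x in Di is at most d
      have hnb : ((Di.filter (fun u => W.Adj x u)).card : ℝ) ≤ d := by
        have hset : (W.neighborSet x ∩ (↑R ∪ {y | y ∈ l.take i}))
            = ↑(Di.filter (fun u => W.Adj x u)) := by
          ext u
          simp only [Set.mem_inter_iff, SimpleGraph.mem_neighborSet, Set.mem_union,
            Set.mem_setOf_eq, Finset.coe_filter, Finset.mem_coe, hDi, Finset.mem_union,
            List.mem_toFinset, Set.mem_setOf_eq]
          tauto
        have := hbound i hi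
        rw [hset, Set.ncard_coe_finset] at this
        exact_mod_cast this
      -- candidate count for each partial embedding
      have hstep : ∀ ψ ∈ Si, (⌈ε * n⌉₊ : ℕ) ≤
          ((Si'.bipartiteAbove (fun ψ' φ => Function.update φ x v₀ = ψ') ψ).card) := by
        intro ψ hψ
        rw [hSi, Finset.mem_filter] at hψ
        obtain ⟨-, hroot, hinj, hadj, hdef⟩ := hψ
        set C := (Finset.univ : Finset (Fin n)).filter (fun c =>
          (∀ u ∈ Di, c ≠ ψ u) ∧ (∀ u ∈ Di, W.Adj x u → G.Adj (ψ u) c)) with hC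
        -- lower bound on |C|
        have hCcompl : Cᶜ ⊆ Di.image ψ ∪ (Di.filter (fun u => W.Adj x u)).biUnion
            (fun u => ((Finset.univ : Finset (Fin n)).filter (fun c => G.Adj (ψ u) c))ᶜ) := by
          intro c hc
          simp only [Finset.mem_compl, hC, Finset.mem_filter, Finset.mem_univ, true_and] at hc
          push_neg at hc
          simp only [Finset.mem_union, Finset.mem_image, Finset.mem_biUnion, Finset.mem_filter,
            Finset.mem_compl, Finset.mem_univ, true_and]
          by_cases hA : ∀ u ∈ Di, c ≠ ψ u
          · obtain ⟨u, hu, hadjx, hnadj⟩ := hc hA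
            exact Or.inr ⟨u, ⟨hu, hadjx⟩, hnadj⟩
          · push_neg at hA
            obtain ⟨u, hu, he⟩ := hA
            exact Or.inl ⟨u, hu, he.symm⟩
        have hdegcard : ∀ u : Fin n,
            (((Finset.univ : Finset (Fin n)).filter (fun c => G.Adj u c)).card : ℝ)
              = (degOf G u : ℝ) := by
          intro u
          have : G.neighborSet u = ↑((Finset.univ : Finset (Fin n)).filter (fun c => G.Adj u c)) := by
            ext c; simp [SimpleGraph.mem_neighborSet]
          rw [degOf, this, Set.ncard_coe_finset]
        have hsum : ∀ u ∈ Di.filter (fun u => W.Adj x u),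
            ((((Finset.univ : Finset (Fin n)).filter (fun c => G.Adj (ψ u) c))ᶜ.card : ℝ))
              ≤ (1/(d:ℝ) - ε) * n := by
          intro u _
          have h1 : (((Finset.univ : Finset (Fin n)).filter (fun c => G.Adj (ψ u) c))ᶜ.card : ℝ)
              = n - (degOf G (ψ u) : ℝ) := by
            have := Finset.card_compl ((Finset.univ : Finset (Fin n)).filter (fun c => G.Adj (ψ u) c))
            have hle : ((Finset.univ : Finset (Fin n)).filter (fun c => G.Adj (ψ u) c)).card ≤ n := by
              calc _ ≤ (Finset.univ : Finset (Fin n)).card := Finset.card_filter_le _ _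
              _ = n := by simp
            rw [this]
            rw [Fintype.card_fin]
            rw [Nat.cast_sub hle]
            rw [hdegcard]
          rw [h1]
          have := hG (ψ u)
          nlinarith
        have hCbig : ε * n ≤ (C.card : ℝ) := by
          have h0 : C.card + Cᶜ.card = n := by
            rw [Finset.card_add_card_compl, Fintype.card_fin]
          have h1 : (Cᶜ.card : ℝ) ≤ (Di.image ψ ∪ (Di.filter (fun u => W.Adj x u)).biUnion
              (fun u => ((Finset.univ : Finset (Fin n)).filter (fun c => G.Adj (ψ u) c))ᶜ)).card := by
            exact_mod_cast Finset.card_le_card hCcompl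
          have h2 : ((Di.image ψ ∪ (Di.filter (fun u => W.Adj x u)).biUnion
              (fun u => ((Finset.univ : Finset (Fin n)).filter (fun c => G.Adj (ψ u) c))ᶜ)).card : ℝ)
              ≤ (Di.image ψ).card + ((Di.filter (fun u => W.Adj x u)).biUnion
              (fun u => ((Finset.univ : Finset (Fin n)).filter (fun c => G.Adj (ψ u) c))ᶜ)).card := by
            exact_mod_cast Finset.card_union_le _ _
          have h3 : ((Di.image ψ).card : ℝ) ≤ R.card + i := by
            have := Finset.card_image_le (s := Di) (f := ψ)
            calc ((Di.image ψ).card : ℝ) ≤ (Di.card : ℝ) := by exact_mod_cast this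
            _ ≤ R.card + i := hDcard i
          have h4 : (((Di.filter (fun u => W.Adj x u)).biUnion
              (fun u => ((Finset.univ : Finset (Fin n)).filter (fun c => G.Adj (ψ u) c))ᶜ)).card : ℝ)
              ≤ ∑ u ∈ Di.filter (fun u => W.Adj x u),
                ((((Finset.univ : Finset (Fin n)).filter (fun c => G.Adj (ψ u) c))ᶜ.card : ℝ)) := by
            exact_mod_cast Finset.card_biUnion_le
          have h5 : ∑ u ∈ Di.filter (fun u => W.Adj x u),
                ((((Finset.univ : Finset (Fin n)).filter (fun c => G.Adj (ψ u) c))ᶜ.card : ℝ))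
              ≤ ((Di.filter (fun u => W.Adj x u)).card : ℝ) * ((1/(d:ℝ) - ε) * n) := by
            have := Finset.sum_le_card_nsmul (Di.filter (fun u => W.Adj x u))
              _ ((1/(d:ℝ) - ε) * n) hsum
            simpa [nsmul_eq_mul] using this
          have h6 : ((Di.filter (fun u => W.Adj x u)).card : ℝ) * ((1/(d:ℝ) - ε) * n)
              ≤ (d:ℝ) * ((1/(d:ℝ) - ε) * n) := by
            have hnn : 0 ≤ (1/(d:ℝ) - ε) * n := by
              apply mul_nonneg
              · linarith
              · linarith
            exact mul_le_mul_of_nonneg_right hnb hnn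
          have h7 : (d:ℝ) * ((1/(d:ℝ) - ε) * n) = n - (d:ℝ) * ε * n := by
            field_simp
          have h8 : (C.card : ℝ) = n - (Cᶜ.card : ℝ) := by
            have : (C.card : ℝ) + (Cᶜ.card : ℝ) = n := by exact_mod_cast h0
            linarith
          have h9 : ((R.card : ℝ) + i) ≤ N := by
            have : R.card + i ≤ N := by omega
            exact_mod_cast this
          have h10 : 2 * (ε * n) ≤ (d:ℝ) * ε * n := by nlinarith
          rw [h8]
          nlinarith
        -- each candidate gives an extension
        have himg : C.image (fun c => Function.update ψ x c) ⊆
            Si'.bipartiteAbove (fun ψ' φ => Function.update φ x v₀ = ψ') ψ := by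
          intro φ hφ
          simp only [Finset.mem_image] at hφ
          obtain ⟨c, hc, rfl⟩ := hφ
          rw [hC, Finset.mem_filter] at hc
          obtain ⟨-, hc1, hc2⟩ := hc
          rw [Finset.bipartiteAbove, Finset.mem_filter]
          constructor
          · rw [hSi', Finset.mem_filter]
            refine ⟨Finset.mem_univ _, ?_, ?_, ?_, ?_⟩
            · intro v hv
              rw [Function.update_of_ne (hneR v hv)]
              exact hroot v hv
            · rw [hDs, Finset.coe_insert]
              rw [Set.injOn_insert (fun h => hxD (Finset.mem_coe.mp h))]
              constructor
              · intro a ha b hb hab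
                rw [Function.update_of_ne (hneD' a ha), Function.update_of_ne (hneD' b hb)] at hab
                exact hinj ha hb hab
              · rw [Function.update_self]
                rintro ⟨a, ha, hab⟩
                rw [Function.update_of_ne (hneD' a ha)] at hab
                exact hc1 a (Finset.mem_coe.mp ha) hab.symm
            · intro u hu v hv huv
              rw [hDs, Finset.mem_insert] at hu hv
              rcases hu with rfl | hu
              · rcases hv with rfl | hv
                · exact absurd huv (W.loopless.irrefl _)
                · rw [Function.update_self,
                    Function.update_of_ne (hneD v hv)]
                  exact (hc2 v hv huv).symm
              · rcases hv with rfl | hv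
                · rw [Function.update_self,
                    Function.update_of_ne (hneD u hu)]
                  exact hc2 u hu (W.symm.symm _ _ huv)
                · rw [Function.update_of_ne (hneD u hu), Function.update_of_ne (hneD v hv)]
                  exact hadj u hu v hv huv
            · intro y hy
              rw [hDs, Finset.mem_insert] at hy
              push_neg at hy
              rw [Function.update_of_ne hy.1]
              exact hdef y hy.2
          · rw [Function.update_idem]
            rw [show v₀ = ψ x from (hdef x hxD).symm]
            exact Function.update_eq_self x ψ
        have hinjim : (C.image (fun c => Function.update ψ x c)).card = C.card := by
          apply Finset.card_image_of_injective
          intro a b hab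
          have h2 : Function.update ψ x a x = Function.update ψ x b x := congrFun hab x
          rwa [Function.update_self, Function.update_self] at h2
        calc (⌈ε * n⌉₊ : ℕ) ≤ C.card := Nat.ceil_le.mpr (by exact_mod_cast hCbig)
        _ = (C.image (fun c => Function.update ψ x c)).card := hinjim.symm
        _ ≤ _ := Finset.card_le_card himg
      -- each extension forgets to a unique partial embedding
      have hfiber : ∀ φ ∈ Si',
          ((Si.bipartiteBelow (fun ψ' φ' => Function.update φ' x v₀ = ψ') φ).card) ≤ 1 := by
        intro φ _
        apply Finset.card_le_one.mpr
        intro a ha b hb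
        rw [Finset.bipartiteBelow, Finset.mem_filter] at ha hb
        rw [← ha.2, ← hb.2]
      have hcount := Finset.card_mul_le_card_mul (s := Si) (t := Si') (m := ⌈ε * n⌉₊)
        (n := 1) (fun ψ' φ => Function.update φ x v₀ = ψ') hstep hfiber
      rw [mul_one] at hcount
      -- put it together
      have hm : ε * n ≤ (⌈ε * n⌉₊ : ℝ) := Nat.le_ceil _
      have hSnn : (0:ℝ) ≤ (Si.card : ℝ) := by positivity
      calc (ε * n) ^ (i+1) = (ε * n) ^ i * (ε * n) := by ring
      _ ≤ (Si.card : ℝ) * (⌈ε * n⌉₊ : ℝ) := by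
          apply mul_le_mul ihv hm (by nlinarith) hSnn
      _ = ((Si.card * ⌈ε * n⌉₊ : ℕ) : ℝ) := by push_cast; ring
      _ ≤ ((Si'.card : ℕ) : ℝ) := by exact_mod_cast hcount
  -- conclude
  have hfin := key k le_rfl
  have huniv : R ∪ (l.take k).toFinset = Finset.univ := by
    rw [hk, List.take_length, hcover]
  have hset : {φ : Fin N → Fin n | Function.Injective φ ∧ (∀ v ∈ R, φ v = ι v) ∧
      ∀ u v, W.Adj u v → G.Adj (φ u) (φ v)}
      = ↑((Finset.univ : Finset (Fin N → Fin n)).filter (fun φ =>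
        (∀ v ∈ R, φ v = ι v) ∧ Set.InjOn φ ↑(R ∪ (l.take k).toFinset) ∧
        (∀ u ∈ R ∪ (l.take k).toFinset, ∀ v ∈ R ∪ (l.take k).toFinset,
          W.Adj u v → G.Adj (φ u) (φ v)) ∧
        ∀ x, x ∉ R ∪ (l.take k).toFinset → φ x = v₀)) := by
    ext φ
    simp only [Set.mem_setOf_eq, Finset.coe_filter, Set.mem_setOf_eq, Finset.mem_univ, true_and,
      huniv]
    constructor
    · rintro ⟨h1, h2, h3⟩
      refine ⟨h2, fun a _ b _ hab => h1 hab, fun u _ v _ huv => h3 u v huv, ?_⟩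
      intro y hy
      simp at hy
    · rintro ⟨h1, h2, h3, -⟩
      refine ⟨fun a b hab => h2 ?_ ?_ hab, h1, fun u v huv => h3 u ?_ v ?_ huv⟩ <;> simp
  rw [hset, Set.ncard_coe_finset]
  have hexp : N - R.card = k := by omega
  rw [hexp]
  exact hfin
end

section
/- For every integer g ≥ 2 and real ε > 0, there exists c > 0 such that the following holds for every sufficiently large integer n: for every graph G on the vertex set of K_n with minimum degree at least (3/4 + ε)·n and for every triangle R on three vertices of K_n, there are at least c·n^{2g−1} distinct g-spheres rooted at R all of whose non-root edges lie in G. -/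
open Finset
open scoped Classical

private lemma snoc_eq_of_lt {m n : ℕ} (w : Fin m → Fin n) (z : Fin n) (j : Fin (m+1))
    (h : (j : ℕ) < m) : (Fin.snoc w z : Fin (m+1) → Fin n) j = w ⟨j, h⟩ := by
  have hj : j = Fin.castSucc ⟨(j:ℕ), h⟩ := Fin.ext rfl
  calc (Fin.snoc w z : Fin (m+1) → Fin n) j
      = (Fin.snoc w z : Fin (m+1) → Fin n) (Fin.castSucc ⟨(j:ℕ), h⟩) := by rw [← hj]
    _ = w ⟨(j:ℕ), h⟩ := Fin.snoc_castSucc ..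

private lemma seq_count {n : ℕ} (z₀ : Fin n) (t : ℕ) :
    ∀ (m : ℕ) (A : Fin m → (Fin m → Fin n) → Finset (Fin n)),
    (∀ i w w', (∀ j, j < i → w j = w' j) → A i w = A i w') →
    (∀ i w, t ≤ (A i w).card) →
    t ^ m ≤ (Finset.univ.filter (fun w : Fin m → Fin n => ∀ i, w i ∈ A i w)).card := by
  intro m
  induction m with
  | zero =>
      intro A _ _
      have h1 : (Finset.univ.filter (fun w : Fin 0 → Fin n => ∀ i, w i ∈ A i w))
          = Finset.univ := by
        ext w; simp
      rw [pow_zero, h1, Finset.card_univ]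
      simp
  | succ m ih =>
      intro A hdep hcard
      have hdep' : ∀ i (w w' : Fin m → Fin n), (∀ j, j < i → w j = w' j) →
          A i.castSucc (Fin.snoc w z₀) = A i.castSucc (Fin.snoc w' z₀) := by
        intro i w w' hag
        apply hdep
        intro j hj
        have hjm : (j:ℕ) < m := by
          have h1 : (j:ℕ) < (i:ℕ) := hj
          have h2 : (i:ℕ) < m := i.isLt
          omega
        rw [snoc_eq_of_lt w z₀ j hjm, snoc_eq_of_lt w' z₀ j hjm]
        exact hag ⟨(j:ℕ), hjm⟩ hj
      have hS' := ih (fun i w => A i.castSucc (Fin.snoc w z₀)) hdep'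
        (fun i w => hcard _ _)
      set S' := Finset.univ.filter
        (fun w : Fin m → Fin n => ∀ i, w i ∈ A i.castSucc (Fin.snoc w z₀)) with hS'def
      set B : (Fin m → Fin n) → Finset (Fin n) := fun w => A (Fin.last m) (Fin.snoc w z₀)
        with hB
      have hmaps : ∀ q ∈ S'.sigma (fun w => B w),
          (Fin.snoc q.1 q.2 : Fin (m+1) → Fin n) ∈
            Finset.univ.filter (fun w : Fin (m+1) → Fin n => ∀ i, w i ∈ A i w) := by
        rintro ⟨w, z⟩ hq
        rw [Finset.mem_sigma] at hq
        obtain ⟨hw, hz⟩ := hq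
        rw [Finset.mem_filter] at hw ⊢
        refine ⟨Finset.mem_univ _, ?_⟩
        intro i
        have hAg : A i (Fin.snoc w z) = A i (Fin.snoc w z₀) := by
          apply hdep
          intro j hj
          have hjm : (j:ℕ) < m := by
            have h1 : (j:ℕ) < (i:ℕ) := hj
            have h2 : (i:ℕ) < m + 1 := i.isLt
            omega
          rw [snoc_eq_of_lt w z j hjm, snoc_eq_of_lt w z₀ j hjm]
        by_cases hi : (i:ℕ) < m
        · have h2 : i = Fin.castSucc ⟨(i:ℕ), hi⟩ := Fin.ext rfl
          rw [hAg, h2, Fin.snoc_castSucc]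
          exact hw.2 ⟨(i:ℕ), hi⟩
        · have h2 : i = Fin.last m := by
            apply Fin.ext
            have := i.isLt
            simp only [Fin.val_last]
            omega
          rw [hAg, h2, Fin.snoc_last]
          exact hz
      have hinj : Set.InjOn (fun q : (_ : Fin m → Fin n) × Fin n => (Fin.snoc q.1 q.2 : Fin (m+1) → Fin n))
          (S'.sigma (fun w => B w)) := by
        rintro ⟨w, z⟩ _ ⟨w', z'⟩ _ h
        simp only at h
        have h1 : w = w' := by
          have := congrArg Fin.init h
          simpa [Fin.init_snoc] using this
        have h2 : z = z' := by
          have := congrArg (fun f : Fin (m+1) → Fin n => f (Fin.last m)) h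
          simpa [Fin.snoc_last] using this
        subst h1; subst h2; rfl
      have hcardle := Finset.card_le_card_of_injOn _ hmaps hinj
      rw [Finset.card_sigma] at hcardle
      have hsum : S'.card * t ≤ ∑ w ∈ S', (B w).card := by
        calc S'.card * t = ∑ _w ∈ S', t := by rw [Finset.sum_const, smul_eq_mul]
          _ ≤ ∑ w ∈ S', (B w).card := Finset.sum_le_sum (fun w _ => hcard _ _)
      calc t ^ (m+1) = t ^ m * t := pow_succ t m
        _ ≤ S'.card * t := Nat.mul_le_mul_right t hS'
        _ ≤ ∑ w ∈ S', (B w).card := hsum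
        _ ≤ _ := hcardle

private lemma inter4 {n : ℕ} (s t u v : Finset (Fin n)) :
    s.card + t.card + u.card + v.card ≤ 3 * n + (s ∩ t ∩ u ∩ v).card := by
  have h1 := Finset.card_union_add_card_inter s t
  have h2 := Finset.card_union_add_card_inter u v
  have h3 := Finset.card_union_add_card_inter (s ∩ t) (u ∩ v)
  have e : (s ∩ t) ∩ (u ∩ v) = s ∩ t ∩ u ∩ v := (Finset.inter_assoc (s ∩ t) u v).symm
  rw [e] at h3
  have hb1 : (s ∪ t).card ≤ n := le_trans (Finset.card_le_univ _) (by simp)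
  have hb2 : (u ∪ v).card ≤ n := le_trans (Finset.card_le_univ _) (by simp)
  have hb3 : ((s ∩ t) ∪ (u ∩ v)).card ≤ n := le_trans (Finset.card_le_univ _) (by simp)
  omega

set_option maxHeartbeats 2000000 in
/-- **Counting `g`-spheres.** For every integer `g ≥ 2` and real `ε > 0` there is `c > 0`
such that for all large `n`: for every graph `G` on the vertices of `K_n` with minimum
degree at least `(3/4 + ε)·n` and every triangle `R = {v, x, y}` on three distinct
vertices of `K_n`, there are at least `c·n^{2g−1}` distinct `g`-spheres rooted at `R` all
of whose non-root edges lie in `G`.  A `g`-sphere rooted at `R` is given by the choice of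
the `2g−1` new vertices `u, b₂, …, b_{2g−1}`; here `p.1 = u` and `p.2 j = b_{j+1}` (so
`p.2 0 = b₁ = x` and `p.2 (2g−1) = b_{2g} = y` are the non-apex root vertices), and the
required non-root edges are `v bⱼ` for `2 ≤ j ≤ 2g−1`, `u bⱼ` for `1 ≤ j ≤ 2g`, and
`bⱼ b_{j+1}` for `1 ≤ j ≤ 2g−1` (in the paper's 1-based indexing). -/
theorem gSphere_count (g : ℕ) (hg : 2 ≤ g) (ε : ℝ) (hε : 0 < ε) :
    ∃ c : ℝ, 0 < c ∧ ∃ n₀ : ℕ, ∀ n : ℕ, n₀ ≤ n →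
      ∀ G : SimpleGraph (Fin n),
        (∀ w, (3 / 4 + ε) * n ≤ (degOf G w : ℝ)) →
        ∀ v x y : Fin n, v ≠ x → v ≠ y → x ≠ y →
          c * (n:ℝ) ^ (2 * g - 1) ≤
            (({p : Fin n × (Fin (2 * g) → Fin n) |
                Function.Injective p.2 ∧ (∀ j, p.2 j ≠ v) ∧ (∀ j, p.2 j ≠ p.1) ∧
                p.1 ≠ v ∧
                p.2 ⟨0, by omega⟩ = x ∧ p.2 ⟨2 * g - 1, by omega⟩ = y ∧
                (∀ j : Fin (2 * g), 1 ≤ (j : ℕ) → (j : ℕ) ≤ 2 * g - 2 → G.Adj v (p.2 j)) ∧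
                (∀ j : Fin (2 * g), G.Adj p.1 (p.2 j)) ∧
                (∀ (j : ℕ) (hj : j + 1 < 2 * g),
                  G.Adj (p.2 ⟨j, by omega⟩) (p.2 ⟨j + 1, hj⟩))}).ncard : ℝ) := by
  have hε8 : (0:ℝ) < min ε (1/8) := lt_min hε (by norm_num)
  set ε' : ℝ := min ε (1/8) with hε'def
  have hε'le : ε' ≤ 1/8 := min_le_right _ _
  have hε'ε : ε' ≤ ε := min_le_left _ _
  refine ⟨ε' ^ (2*g-1), pow_pos hε8 _, ⌈(2*(g:ℝ)+3)/(3*ε')⌉₊ + 1, ?_⟩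
  intro n hn G hdegOf v x y hvx hvy hxy
  have hn1 : 0 < n := by omega
  have hnR : (0:ℝ) ≤ (n:ℝ) := Nat.cast_nonneg n
  have hM3 : 3 ≤ 2*g-1 := by omega
  -- degrees
  have hdeg : ∀ w, (3/4 + ε') * n ≤ (G.degree w : ℝ) := by
    intro w
    have h1 : degOf G w = G.degree w := by
      rw [degOf, Set.ncard_eq_toFinset_card', SimpleGraph.degree]
      congr 1
    have h2 := hdegOf w
    rw [h1] at h2
    refine le_trans ?_ h2
    apply mul_le_mul_of_nonneg_right _ hnR
    linarith
  set d : ℕ := ⌈(3/4+ε')*(n:ℝ)⌉₊ with hd_def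
  have hd : ∀ w, d ≤ G.degree w := fun w => Nat.ceil_le.mpr (hdeg w)
  set t : ℕ := ⌈ε' * (n:ℝ)⌉₊ with ht_def
  have hkey : t + (2*g+2) + 3*n ≤ 4*d := by
    have h1 : (t:ℝ) < ε'*n + 1 := Nat.ceil_lt_add_one (by positivity)
    have h2 : (3/4+ε')*n ≤ (d:ℝ) := Nat.le_ceil _
    have h3 : 2*(g:ℝ)+3 ≤ 3*ε'*n := by
      have h4 : (2*(g:ℝ)+3)/(3*ε') ≤ (⌈(2*(g:ℝ)+3)/(3*ε')⌉₊ : ℝ) := Nat.le_ceil _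
      have h5 : ((⌈(2*(g:ℝ)+3)/(3*ε')⌉₊ + 1 : ℕ) : ℝ) ≤ n := Nat.cast_le.mpr hn
      have h6 : (2*(g:ℝ)+3)/(3*ε') ≤ n := by push_cast at h5; linarith
      rw [div_le_iff₀ (by positivity)] at h6
      linarith
    have h7 : ((t + (2*g+2) + 3*n : ℕ):ℝ) ≤ ((4*d : ℕ):ℝ) := by push_cast; linarith
    exact_mod_cast h7
  -- the step sets
  have h0m : 0 < 2*g-1 := by omega
  set z0 : Fin (2*g-1) := ⟨0, h0m⟩ with hz0
  set A : Fin (2*g-1) → (Fin (2*g-1) → Fin n) → Finset (Fin n) := fun i w =>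
    (if (i:ℕ) = 0 then
        G.neighborFinset x ∩ G.neighborFinset y ∩ G.neighborFinset x ∩ G.neighborFinset y
      else if (i:ℕ) = 2*g-2 then
        G.neighborFinset v ∩ G.neighborFinset (w z0) ∩
          G.neighborFinset (if (i:ℕ) = 1 then x
            else w ⟨(i:ℕ)-1, Nat.lt_of_le_of_lt (Nat.sub_le _ _) i.isLt⟩) ∩
          G.neighborFinset y
      else
        G.neighborFinset v ∩ G.neighborFinset (w z0) ∩
          G.neighborFinset (if (i:ℕ) = 1 then x
            else w ⟨(i:ℕ)-1, Nat.lt_of_le_of_lt (Nat.sub_le _ _) i.isLt⟩) ∩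
          G.neighborFinset v)
    \ (({v, x, y} : Finset (Fin n)) ∪ (Finset.univ.filter (fun j => j < i)).image w)
    with hA
  have hdepA : ∀ i (w w' : Fin (2*g-1) → Fin n), (∀ j, j < i → w j = w' j) → A i w = A i w' := by
    intro i w w' hag
    have hF : (({v,x,y} : Finset (Fin n)) ∪ (Finset.univ.filter (fun j => j < i)).image w)
        = ({v,x,y} : Finset (Fin n)) ∪ (Finset.univ.filter (fun j => j < i)).image w' := by
      congr 1
      apply Finset.image_congr
      intro j hj
      simp only [Finset.coe_filter, Set.mem_setOf_eq] at hj
      exact hag j hj.2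
    simp only [hA]
    by_cases h0 : (i:ℕ) = 0
    · rw [if_pos h0, if_pos h0, hF]
    · rw [if_neg h0, if_neg h0]
      have h00 : w z0 = w' z0 := hag _ (Fin.lt_def.mpr (Nat.pos_of_ne_zero h0))
      have hprev : (if (i:ℕ) = 1 then x
            else w ⟨(i:ℕ)-1, Nat.lt_of_le_of_lt (Nat.sub_le _ _) i.isLt⟩)
          = (if (i:ℕ) = 1 then x
            else w' ⟨(i:ℕ)-1, Nat.lt_of_le_of_lt (Nat.sub_le _ _) i.isLt⟩) := by
        by_cases h1 : (i:ℕ) = 1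
        · rw [if_pos h1, if_pos h1]
        · rw [if_neg h1, if_neg h1]
          exact hag _ (Fin.lt_def.mpr (show (i:ℕ)-1 < (i:ℕ) by omega))
      rw [h00, hprev, hF]
  have hcardA : ∀ i w, t ≤ (A i w).card := by
    intro i w
    simp only [hA]
    have hFcard : ((({v,x,y} : Finset (Fin n)) ∪
        (Finset.univ.filter (fun j => j < i)).image w)).card ≤ 2*g+2 := by
      refine le_trans (Finset.card_union_le _ _) ?_
      have h1 : ({v,x,y} : Finset (Fin n)).card ≤ 3 := by
        have h2 := Finset.card_insert_le v ({x,y} : Finset (Fin n))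
        have h3 := Finset.card_insert_le x ({y} : Finset (Fin n))
        simp only [Finset.card_singleton] at h3
        omega
      have h2 : ((Finset.univ.filter (fun j => j < i)).image w).card ≤ 2*g-1 := by
        refine le_trans Finset.card_image_le ?_
        refine le_trans (Finset.card_filter_le _ _) ?_
        simp
      omega
    have key : ∀ a b c e : Fin n,
        t ≤ ((G.neighborFinset a ∩ G.neighborFinset b ∩ G.neighborFinset c ∩ G.neighborFinset e)
          \ (({v,x,y} : Finset (Fin n)) ∪ (Finset.univ.filter (fun j => j < i)).image w)).card := by
      intro a b c e
      have h4 := inter4 (G.neighborFinset a) (G.neighborFinset b) (G.neighborFinset c)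
        (G.neighborFinset e)
      have hda : d ≤ (G.neighborFinset a).card := hd a
      have hdb : d ≤ (G.neighborFinset b).card := hd b
      have hdc : d ≤ (G.neighborFinset c).card := hd c
      have hde : d ≤ (G.neighborFinset e).card := hd e
      set Q := G.neighborFinset a ∩ G.neighborFinset b ∩ G.neighborFinset c ∩ G.neighborFinset e
        with hQ
      set F := (({v,x,y} : Finset (Fin n)) ∪ (Finset.univ.filter (fun j => j < i)).image w)
        with hFd
      have h5 : Q.card ≤ (Q \ F).card + F.card := by
        have h6 := Finset.card_sdiff_add_card Q F
        have h7 : Q.card ≤ (Q ∪ F).card := Finset.card_le_card Finset.subset_union_left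
        omega
      omega
    split_ifs <;> apply key
  set φ : (Fin (2*g-1) → Fin n) → Fin n × (Fin (2*g) → Fin n) := fun w =>
    (w z0, fun j => if h0 : (j:ℕ) = 0 then x else if hl : (j:ℕ) = 2*g-1 then y
      else w ⟨(j:ℕ), lt_of_le_of_ne (Nat.le_pred_of_lt j.isLt) hl⟩) with hφ
  have hbev0 : ∀ (w : Fin (2*g-1) → Fin n) (j : Fin (2*g)), (j:ℕ) = 0 → (φ w).2 j = x := by
    intro w j h
    simp only [hφ]
    rw [dif_pos h]
  have hbevl : ∀ (w : Fin (2*g-1) → Fin n) (j : Fin (2*g)), (j:ℕ) = 2*g-1 → (φ w).2 j = y := by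
    intro w j h
    simp only [hφ]
    rw [dif_neg (by omega), dif_pos h]
  have hbevm : ∀ (w : Fin (2*g-1) → Fin n) (j : Fin (2*g)) (h0 : (j:ℕ) ≠ 0)
      (h1 : (j:ℕ) ≠ 2*g-1),
      (φ w).2 j = w ⟨(j:ℕ), by have := j.isLt; omega⟩ := by
    intro w j h0 h1
    simp only [hφ]
    rw [dif_neg h0, dif_neg h1]
  rw [Set.ncard_eq_toFinset_card']
  have hcardle : (Finset.univ.filter (fun w : Fin (2*g-1) → Fin n => ∀ i, w i ∈ A i w)).card
      ≤ (Set.toFinset {p : Fin n × (Fin (2 * g) → Fin n) |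
                Function.Injective p.2 ∧ (∀ j, p.2 j ≠ v) ∧ (∀ j, p.2 j ≠ p.1) ∧
                p.1 ≠ v ∧
                p.2 ⟨0, by omega⟩ = x ∧ p.2 ⟨2 * g - 1, by omega⟩ = y ∧
                (∀ j : Fin (2 * g), 1 ≤ (j : ℕ) → (j : ℕ) ≤ 2 * g - 2 → G.Adj v (p.2 j)) ∧
                (∀ j : Fin (2 * g), G.Adj p.1 (p.2 j)) ∧
                (∀ (j : ℕ) (hj : j + 1 < 2 * g),
                  G.Adj (p.2 ⟨j, by omega⟩) (p.2 ⟨j + 1, hj⟩))}).card := by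
    apply Finset.card_le_card_of_injOn φ
    · intro w hw
      have hAmem : ∀ i, w i ∈ A i w := (Finset.mem_filter.mp hw).2
      have hsd : ∀ i : Fin (2*g-1),
          w i ∉ (({v,x,y} : Finset (Fin n)) ∪
            (Finset.univ.filter (fun j => j < i)).image w) := by
        intro i
        have h := hAmem i
        rw [hA] at h
        beta_reduce at h
        split_ifs at h <;> exact (Finset.mem_sdiff.mp h).2
      have hne : ∀ i : Fin (2*g-1), w i ≠ v ∧ w i ≠ x ∧ w i ≠ y := by
        intro i
        have h := hsd i
        simp only [Finset.mem_union, Finset.mem_insert, Finset.mem_singleton, not_or] at h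
        exact ⟨h.1.1, h.1.2.1, h.1.2.2⟩
      have hwinj : ∀ i j : Fin (2*g-1), j < i → w i ≠ w j := by
        intro i j hji heq
        apply hsd i
        rw [Finset.mem_union]
        right
        exact Finset.mem_image.mpr ⟨j, Finset.mem_filter.mpr ⟨Finset.mem_univ _, hji⟩, heq.symm⟩
      have hq0 : G.Adj x (w z0) ∧ G.Adj y (w z0) := by
        have h := hAmem z0
        rw [hA] at h
        beta_reduce at h
        rw [if_pos (show ((z0 : Fin (2*g-1)):ℕ) = 0 from rfl)] at h
        have h2 := (Finset.mem_sdiff.mp h).1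
        simp only [Finset.mem_inter, SimpleGraph.mem_neighborFinset] at h2
        exact ⟨h2.1.1.1, h2.2⟩
      have hqmid : ∀ i : Fin (2*g-1), (i:ℕ) ≠ 0 →
          G.Adj v (w i) ∧ G.Adj (w z0) (w i) ∧
          G.Adj (if (i:ℕ) = 1 then x
            else w ⟨(i:ℕ)-1, Nat.lt_of_le_of_lt (Nat.sub_le _ _) i.isLt⟩) (w i) := by
        intro i hi
        have h := hAmem i
        rw [hA] at h
        beta_reduce at h
        rw [if_neg hi] at h
        by_cases h1 : (i:ℕ) = 2*g-2
        · rw [if_pos h1] at h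
          have h2 := (Finset.mem_sdiff.mp h).1
          simp only [Finset.mem_inter, SimpleGraph.mem_neighborFinset] at h2
          exact ⟨h2.1.1.1, h2.1.1.2, h2.1.2⟩
        · rw [if_neg h1] at h
          have h2 := (Finset.mem_sdiff.mp h).1
          simp only [Finset.mem_inter, SimpleGraph.mem_neighborFinset] at h2
          exact ⟨h2.1.1.1, h2.1.1.2, h2.1.2⟩
      have hql : G.Adj y (w ⟨2*g-2, by omega⟩) := by
        have h := hAmem ⟨2*g-2, by omega⟩
        rw [hA] at h
        beta_reduce at h
        rw [if_neg (show ¬((2*g-2 : ℕ) = 0) by omega),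
            if_pos (show ((2*g-2 : ℕ) = 2*g-2) from rfl)] at h
        have h2 := (Finset.mem_sdiff.mp h).1
        simp only [Finset.mem_inter, SimpleGraph.mem_neighborFinset] at h2
        exact h2.2
      rw [Finset.mem_coe, Set.mem_toFinset, Set.mem_setOf_eq]
      refine ⟨?_, ?_, ?_, ?_, ?_, ?_, ?_, ?_, ?_⟩
      · intro j j' heq
        have hj := j.isLt
        have hj' := j'.isLt
        by_cases h0 : (j:ℕ) = 0 <;> by_cases h0' : (j':ℕ) = 0
        · exact Fin.ext (by omega)
        · exfalso
          rw [hbev0 w j h0] at heq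
          by_cases hl' : (j':ℕ) = 2*g-1
          · rw [hbevl w j' hl'] at heq; exact hxy heq
          · rw [hbevm w j' h0' hl'] at heq; exact (hne _).2.1 heq.symm
        · exfalso
          rw [hbev0 w j' h0'] at heq
          by_cases hl : (j:ℕ) = 2*g-1
          · rw [hbevl w j hl] at heq; exact hxy heq.symm
          · rw [hbevm w j h0 hl] at heq; exact (hne _).2.1 heq
        · by_cases hl : (j:ℕ) = 2*g-1 <;> by_cases hl' : (j':ℕ) = 2*g-1
          · exact Fin.ext (by omega)
          · exfalso
            rw [hbevl w j hl, hbevm w j' h0' hl'] at heq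
            exact (hne _).2.2 heq.symm
          · exfalso
            rw [hbevl w j' hl', hbevm w j h0 hl] at heq
            exact (hne _).2.2 heq
          · rw [hbevm w j h0 hl, hbevm w j' h0' hl'] at heq
            rcases lt_trichotomy (j:ℕ) (j':ℕ) with hlt | heqv | hgt
            · exact absurd heq.symm (hwinj _ _ (Fin.lt_def.mpr hlt))
            · exact Fin.ext heqv
            · exact absurd heq (hwinj _ _ (Fin.lt_def.mpr hgt))
      · intro j
        by_cases h0 : (j:ℕ) = 0
        · rw [hbev0 w j h0]; exact hvx.symm
        · by_cases hl : (j:ℕ) = 2*g-1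
          · rw [hbevl w j hl]; exact hvy.symm
          · rw [hbevm w j h0 hl]; exact (hne _).1
      · intro j
        show (φ w).2 j ≠ w z0
        by_cases h0 : (j:ℕ) = 0
        · rw [hbev0 w j h0]; exact fun hcc => (hne z0).2.1 hcc.symm
        · by_cases hl : (j:ℕ) = 2*g-1
          · rw [hbevl w j hl]; exact fun hcc => (hne z0).2.2 hcc.symm
          · rw [hbevm w j h0 hl]
            exact hwinj _ z0 (Fin.lt_def.mpr (Nat.pos_of_ne_zero h0))
      · exact (hne z0).1
      · exact hbev0 w _ rfl
      · exact hbevl w _ rfl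
      · intro j hj1 hj2
        have h0 : (j:ℕ) ≠ 0 := by omega
        have hl : (j:ℕ) ≠ 2*g-1 := by omega
        rw [hbevm w j h0 hl]
        exact (hqmid _ h0).1
      · intro j
        show G.Adj (w z0) ((φ w).2 j)
        by_cases h0 : (j:ℕ) = 0
        · rw [hbev0 w j h0]; exact hq0.1.symm
        · by_cases hl : (j:ℕ) = 2*g-1
          · rw [hbevl w j hl]; exact hq0.2.symm
          · rw [hbevm w j h0 hl]; exact (hqmid _ h0).2.1
      · intro j hj
        by_cases hj0 : j = 0
        · subst hj0
          rw [hbev0 w _ (rfl), hbevm w ⟨0+1, hj⟩ (show (0+1 : ℕ) ≠ 0 by omega)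
            (show (0+1 : ℕ) ≠ 2*g-1 by omega)]
          have h := (hqmid ⟨0+1, by omega⟩ (show (0+1 : ℕ) ≠ 0 by omega)).2.2
          rw [if_pos (show ((0+1 : ℕ) = 1) from rfl)] at h
          exact h
        · by_cases hjl : j = 2*g-2
          · subst hjl
            rw [hbevm w ⟨2*g-2, _⟩ (show ¬((2*g-2:ℕ) = 0) by omega)
                (show ¬((2*g-2:ℕ) = 2*g-1) by omega),
              hbevl w ⟨2*g-2+1, hj⟩ (show (2*g-2+1 : ℕ) = 2*g-1 by omega)]
            exact hql.symm
          · rw [hbevm w ⟨j, _⟩ (show ¬(j = 0) from hj0) (show ¬(j = 2*g-1) by omega),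
              hbevm w ⟨j+1, hj⟩ (show ¬(j+1 = 0) by omega) (show ¬(j+1 = 2*g-1) by omega)]
            have h := (hqmid ⟨j+1, by omega⟩ (show ¬(j+1 = 0) by omega)).2.2
            rw [if_neg (show ¬((j+1 : ℕ) = 1) by omega)] at h
            exact h
    · intro w1 hw1 w2 hw2 heq
      funext i
      by_cases h0 : (i:ℕ) = 0
      · rw [show i = z0 from Fin.ext h0]
        exact congrArg Prod.fst heq
      · have hil : (i:ℕ) < 2*g-1 := i.isLt
        have hig : (i:ℕ) < 2*g := by omega
        have hinz : ¬((i:ℕ) = 0) := h0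
        have hinl : ¬((i:ℕ) = 2*g-1) := by omega
        have h3 : (φ w1).2 ⟨(i:ℕ), hig⟩ = (φ w2).2 ⟨(i:ℕ), hig⟩ := by rw [heq]
        rw [hbevm w1 ⟨(i:ℕ), hig⟩ hinz hinl, hbevm w2 ⟨(i:ℕ), hig⟩ hinz hinl] at h3
        exact h3
  calc ε' ^ (2*g-1) * (n:ℝ) ^ (2*g-1) = (ε' * n)^(2*g-1) := (mul_pow _ _ _).symm
    _ ≤ (t:ℝ)^(2*g-1) := pow_le_pow_left₀ (by positivity) (Nat.le_ceil _) _
    _ = ((t^(2*g-1) : ℕ) : ℝ) := by push_cast; ring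
    _ ≤ _ := Nat.cast_le.mpr (le_trans (seq_count (⟨0, hn1⟩ : Fin n) t (2*g-1) A hdepA hcardA) hcardle)
end
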